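/- arXiv:1604.06404 — 2 statements merged into one kernel-verified Lean document; each statement's English description precedes it below -/
import Mathlib

section
/- Assume Y₀, τ, τ̃ are integrable. Then the mean of the cycle increment is E[X₁] = (E[Y₀] − E[τ̃]) + P(τ̃ ≤ ξ) [ (E[N] − 1)(E[Y₀] − E[τ ∣ τ ≤ ξ]) + (E[Y₀] − E[τ ∣ τ > ξ]) ], where E[N] = 1/P(τ > ξ). -/
open MeasureTheory ProbabilityTheory Filter Set

set_option linter.unusedSectionVars false

section Helpers

variable {Ω : Type*} [MeasureSpace Ω] [IsProbabilityMeasure (ℙ : Measure Ω)]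

omit [MeasureSpace Ω] [IsProbabilityMeasure (ℙ : Measure Ω)] in
lemma indicator_comp_eq {β : Type*} (X : Ω → β) (s : Set β) (ω : Ω) :
    s.indicator (fun _ => (1:ℝ)) (X ω) = (X ⁻¹' s).indicator (fun _ => (1:ℝ)) ω := by
  by_cases h : X ω ∈ s <;> simp [Set.indicator_apply, h]

lemma aux_int_ind {β : Type*} [MeasurableSpace β] {X : Ω → β} (hX : Measurable X)
    {s : Set β} (hs : MeasurableSet s) :
    Integrable (fun ω => s.indicator (fun _ => (1:ℝ)) (X ω)) ℙ := by
  simp only [indicator_comp_eq]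
  exact (integrable_const (1:ℝ)).indicator (hX hs)

lemma aux_integral_ind {β : Type*} [MeasurableSpace β] {X : Ω → β} (hX : Measurable X)
    {s : Set β} (hs : MeasurableSet s) :
    ∫ ω, s.indicator (fun _ => (1:ℝ)) (X ω) ∂ℙ = (ℙ (X ⁻¹' s)).toReal := by
  simp only [indicator_comp_eq]
  exact integral_indicator_one (hX hs)

lemma key1 {β : Type*} [MeasurableSpace β] {X : Ω → β} {Z : Ω → ℝ}
    (hX : Measurable X) (hZ : Integrable Z ℙ) (hind : IndepFun X Z ℙ)
    {s : Set β} (hs : MeasurableSet s) :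
    ∫ ω, s.indicator (fun _ => (1:ℝ)) (X ω) * Z ω ∂ℙ
      = (ℙ (X ⁻¹' s)).toReal * ∫ ω, Z ω ∂ℙ := by
  have hcomp : IndepFun (fun ω => s.indicator (fun _ => (1:ℝ)) (X ω)) Z ℙ :=
    hind.comp (measurable_const.indicator hs) measurable_id
  have hmul := hcomp.integral_mul_eq_mul_integral (aux_int_ind hX hs).1 hZ.1
  rw [← aux_integral_ind hX hs]
  simpa [Pi.mul_apply] using hmul

lemma key2 {X1 X2 Z : Ω → ℝ} (h1 : Measurable X1) (h2 : Measurable X2)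
    (hZ : Integrable Z ℙ)
    (hpair : IndepFun (fun ω => (X1 ω, X2 ω)) Z ℙ)
    (h12 : IndepFun X1 X2 ℙ)
    {s t : Set ℝ} (hs : MeasurableSet s) (ht : MeasurableSet t) :
    ∫ ω, (X1 ⁻¹' s).indicator (fun _ => (1:ℝ)) ω *
        ((X2 ⁻¹' t).indicator (fun _ => (1:ℝ)) ω * Z ω) ∂ℙ
      = (ℙ (X1 ⁻¹' s)).toReal * ((ℙ (X2 ⁻¹' t)).toReal * ∫ ω, Z ω ∂ℙ) := by
  set φ : ℝ × ℝ → ℝ :=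
    fun x => s.indicator (fun _ => (1:ℝ)) x.1 * t.indicator (fun _ => (1:ℝ)) x.2 with hφ
  have hφm : Measurable φ :=
    ((measurable_const.indicator hs).comp measurable_fst).mul
      ((measurable_const.indicator ht).comp measurable_snd)
  have hWeq : ∀ ω, φ (X1 ω, X2 ω)
      = (X1 ⁻¹' s).indicator (fun _ => (1:ℝ)) ω * (X2 ⁻¹' t).indicator (fun _ => (1:ℝ)) ω := by
    intro ω
    by_cases hh1 : X1 ω ∈ s <;> by_cases hh2 : X2 ω ∈ t <;>
      simp [hφ, Set.indicator_apply, hh1, hh2]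
  have hWint : Integrable (fun ω => φ (X1 ω, X2 ω)) ℙ := by
    refine Integrable.mono' (integrable_const (1:ℝ))
      (hφm.comp (h1.prodMk h2)).aestronglyMeasurable ?_
    filter_upwards with ω
    rw [Real.norm_eq_abs, hWeq ω]
    by_cases hh1 : ω ∈ X1 ⁻¹' s <;> by_cases hh2 : ω ∈ X2 ⁻¹' t <;>
      simp [Set.indicator_apply, hh1, hh2]
  have hcomp : IndepFun (fun ω => φ (X1 ω, X2 ω)) Z ℙ := hpair.comp hφm measurable_id
  have hmul := hcomp.integral_mul_eq_mul_integral hWint.1 hZ.1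
  have hZ2 : Integrable (fun ω => t.indicator (fun _ => (1:ℝ)) (X2 ω)) ℙ := aux_int_ind h2 ht
  have h12' : IndepFun X1 (fun ω => t.indicator (fun _ => (1:ℝ)) (X2 ω)) ℙ :=
    h12.comp measurable_id (measurable_const.indicator ht)
  have hW : ∫ ω, φ (X1 ω, X2 ω) ∂ℙ = (ℙ (X1 ⁻¹' s)).toReal * (ℙ (X2 ⁻¹' t)).toReal := by
    have h := key1 h1 hZ2 h12' hs
    rw [aux_integral_ind h2 ht] at h
    calc ∫ ω, φ (X1 ω, X2 ω) ∂ℙ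
        = ∫ ω, s.indicator (fun _ => (1:ℝ)) (X1 ω) *
            (t.indicator (fun _ => (1:ℝ)) (X2 ω)) ∂ℙ := by
          simp only [hWeq, indicator_comp_eq]
      _ = (ℙ (X1 ⁻¹' s)).toReal * (ℙ (X2 ⁻¹' t)).toReal := h
  calc ∫ ω, (X1 ⁻¹' s).indicator (fun _ => (1:ℝ)) ω *
        ((X2 ⁻¹' t).indicator (fun _ => (1:ℝ)) ω * Z ω) ∂ℙ
      = ∫ ω, φ (X1 ω, X2 ω) * Z ω ∂ℙ := by
        simp only [hWeq, mul_assoc]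
    _ = (∫ ω, φ (X1 ω, X2 ω) ∂ℙ) * ∫ ω, Z ω ∂ℙ := by simpa [Pi.mul_apply] using hmul
    _ = (ℙ (X1 ⁻¹' s)).toReal * ((ℙ (X2 ⁻¹' t)).toReal * ∫ ω, Z ω ∂ℙ) := by
        rw [hW, mul_assoc]

end Helpers

/-- The increment of the claim surplus process over one regenerative cycle:
`X₁ = (Y₀ − τ̃) + 1_{τ̃ ≤ ξ} ( ∑_{k=1}^{N−1} (Y_k − τ_k^{≤ξ}) + (Y_N − τ_N^{>ξ}) )`. -/
noncomputable def cycleIncrement {Ω : Type*} (ξ : ℝ) (τt τgt : Ω → ℝ)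
    (Y τle : ℕ → Ω → ℝ) (N : Ω → ℕ) (ω : Ω) : ℝ :=
  (Y 0 ω - τt ω) +
    (if τt ω ≤ ξ then
        (∑ k ∈ Finset.Icc 1 (N ω - 1), (Y k ω - τle k ω)) + (Y (N ω) ω - τgt ω)
      else 0)

/-- The family of all sources of randomness in the regenerative cycle, used to express
their mutual independence: the claims `Y k`, the variables `τ_k^{≤ξ}`, together with
`τ̃`, `τ^{>ξ}` and (coerced to `ℝ`) the geometric variable `N`. -/
noncomputable def cycleFamily {Ω : Type*} (τt τgt : Ω → ℝ)
    (Y τle : ℕ → Ω → ℝ) (N : Ω → ℕ) : ℕ ⊕ (ℕ ⊕ Fin 3) → Ω → ℝ :=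
  Sum.elim Y (Sum.elim τle
    (fun j => if j = 0 then τt else if j = 1 then τgt else fun ω => (N ω : ℝ)))

set_option maxHeartbeats 2000000 in
/-- If `Y₀, τ, τ̃` are integrable, then the mean of the cycle increment is
`E X₁ = (E Y₀ − E τ̃) + ℙ(τ̃ ≤ ξ) [ (E N − 1)(E Y₀ − E[τ ∣ τ ≤ ξ]) + (E Y₀ − E[τ ∣ τ > ξ]) ]`
with `E N = 1 / ℙ(τ > ξ) = 1/p`. -/
theorem cycleIncrement_mean
    {Ω : Type*} [MeasureSpace Ω] [IsProbabilityMeasure (ℙ : Measure Ω)]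
    (ξ : ℝ) (hξ : 0 < ξ)
    (τ τt τgt : Ω → ℝ) (Y τle : ℕ → Ω → ℝ) (N : Ω → ℕ)
    (hτmeas : Measurable τ) (hτtmeas : Measurable τt) (hτgtmeas : Measurable τgt)
    (hYmeas : ∀ k, Measurable (Y k)) (hτlemeas : ∀ k, Measurable (τle k))
    (hNmeas : Measurable N)
    (hτpos : ∀ᵐ ω ∂ℙ, 0 < τ ω) (hτtpos : ∀ᵐ ω ∂ℙ, 0 < τt ω)
    (p : ℝ) (hpdef : p = (ℙ {ω | ξ < τ ω}).toReal) (hp0 : 0 < p) (hp1 : p < 1)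
    (hYid : ∀ k, IdentDistrib (Y k) (Y 0) ℙ ℙ) (hYnn : ∀ k, ∀ᵐ ω ∂ℙ, 0 ≤ Y k ω)
    (hτle : ∀ k, Measure.map (τle k) ℙ = Measure.map τ (ℙ[|{ω | τ ω ≤ ξ}]))
    (hτgt : Measure.map τgt ℙ = Measure.map τ (ℙ[|{ω | ξ < τ ω}]))
    (hN : ∀ k : ℕ, 1 ≤ k → ℙ {ω | N ω = k} = ENNReal.ofReal ((1 - p) ^ (k - 1) * p))
    (hindep : iIndepFun (cycleFamily τt τgt Y τle N) ℙ)
    -- integrability assumptions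
    (hYint : Integrable (Y 0) ℙ) (hτint : Integrable τ ℙ) (hτtint : Integrable τt ℙ) :
    ∫ ω, cycleIncrement ξ τt τgt Y τle N ω ∂ℙ =
      ((∫ ω, Y 0 ω ∂ℙ) - ∫ ω, τt ω ∂ℙ) +
        (ℙ {ω | τt ω ≤ ξ}).toReal *
          ((1 / p - 1) * ((∫ ω, Y 0 ω ∂ℙ) - ∫ ω, τ ω ∂(ℙ[|{ω | τ ω ≤ ξ}])) +
            ((∫ ω, Y 0 ω ∂ℙ) - ∫ ω, τ ω ∂(ℙ[|{ω | ξ < τ ω}]))) := by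
    classical
  have hNR : Measurable (fun ω => (N ω : ℝ)) := measurable_from_top.comp hNmeas
  set F : ℕ ⊕ (ℕ ⊕ Fin 3) → Ω → ℝ := cycleFamily τt τgt Y τle N with hFdef
  have hfm : ∀ i, Measurable (F i) := by
    rintro (k | (k | j))
    · exact hYmeas k
    · exact hτlemeas k
    · fin_cases j
      · exact hτtmeas
      · exact hτgtmeas
      · exact hNR
  -- measurable sets
  have hA : ∀ n : ℕ, MeasurableSet {ω | N ω = n} := fun n => hNmeas (measurableSet_singleton n)
  have hB : MeasurableSet {ω | τt ω ≤ ξ} := hτtmeas measurableSet_Iic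
  have hApre : ∀ n : ℕ, (fun ω => (N ω : ℝ)) ⁻¹' {(n : ℝ)} = {ω | N ω = n} := by
    intro n; ext ω; simp
  have hdisj : Pairwise (Function.onFun Disjoint fun n : ℕ => {ω | N ω = n}) := by
    intro m n hmn
    exact Set.disjoint_left.mpr fun ω hm hn => hmn ((hm : N ω = m).symm.trans hn)
  have hUnion : (⋃ n : ℕ, {ω | N ω = n}) = Set.univ := by
    ext ω; simp
  -- probabilities
  have hPgt : ℙ {ω | ξ < τ ω} = ENNReal.ofReal p := by
    rw [hpdef, ENNReal.ofReal_toReal (measure_ne_top _ _)]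
  have hPgt_ne : ℙ {ω | ξ < τ ω} ≠ 0 := by
    rw [hPgt]; exact (ENNReal.ofReal_pos.mpr hp0).ne'
  have hcompl : {ω | τ ω ≤ ξ} = {ω | ξ < τ ω}ᶜ := by ext ω; simp [not_lt]
  have hPle_ne : ℙ {ω | τ ω ≤ ξ} ≠ 0 := by
    rw [hcompl, measure_compl (show MeasurableSet {ω | ξ < τ ω} from hτmeas measurableSet_Ioi) (measure_ne_top _ _), measure_univ, hPgt]
    intro h
    exact absurd (tsub_eq_zero_iff_le.mp h) (not_le.mpr (ENNReal.ofReal_lt_one.mpr hp1))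
  -- integrability with respect to conditional measures
  have hcond : ∀ s : Set Ω, ℙ s ≠ 0 → Integrable τ (ℙ[|s]) := fun s hs =>
    (hτint.restrict).smul_measure (ENNReal.inv_ne_top.mpr hs)
  have hmapint : ∀ (W : Ω → ℝ) (s : Set Ω), Measurable W → ℙ s ≠ 0 →
      Measure.map W ℙ = Measure.map τ (ℙ[|s]) →
      Integrable W ℙ ∧ (∫ ω, W ω ∂ℙ = ∫ ω, τ ω ∂(ℙ[|s])) ∧
      Integrable (fun ω => |W ω|) ℙ ∧ (∫ ω, |W ω| ∂ℙ = ∫ ω, |τ ω| ∂(ℙ[|s])) := by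
    intro W s hW hs hmap
    have habs : Measurable (fun x : ℝ => |x|) := continuous_abs.measurable
    refine ⟨?_, ?_, ?_, ?_⟩
    · have h0 : Integrable id (Measure.map W ℙ) := by
        rw [hmap]
        exact (integrable_map_measure aestronglyMeasurable_id hτmeas.aemeasurable).mpr
          (hcond s hs)
      simpa using (integrable_map_measure aestronglyMeasurable_id hW.aemeasurable).mp h0
    · have e1 : ∫ ω, W ω ∂ℙ = ∫ x, x ∂(Measure.map W ℙ) :=
        (integral_map hW.aemeasurable aestronglyMeasurable_id).symm
      rw [e1, hmap]
      exact integral_map hτmeas.aemeasurable aestronglyMeasurable_id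
    · have h0 : Integrable (fun x : ℝ => |x|) (Measure.map W ℙ) := by
        rw [hmap]
        exact (integrable_map_measure habs.aestronglyMeasurable hτmeas.aemeasurable).mpr
          ((hcond s hs).abs)
      exact (integrable_map_measure habs.aestronglyMeasurable hW.aemeasurable).mp h0
    · have e1 : ∫ ω, |W ω| ∂ℙ = ∫ x, |x| ∂(Measure.map W ℙ) :=
        (integral_map hW.aemeasurable habs.aestronglyMeasurable).symm
      rw [e1, hmap]
      exact integral_map hτmeas.aemeasurable habs.aestronglyMeasurable
  obtain ⟨hτgtint, hτgtval, hτgtabsint, hτgtabsval⟩ :=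
    hmapint τgt _ hτgtmeas hPgt_ne hτgt
  have hτlestuff := fun k => hmapint (τle k) _ (hτlemeas k) hPle_ne (hτle k)
  have hτleint : ∀ k, Integrable (τle k) ℙ := fun k => (hτlestuff k).1
  have hτleval : ∀ k, ∫ ω, τle k ω ∂ℙ = ∫ ω, τ ω ∂(ℙ[|{ω | τ ω ≤ ξ}]) :=
    fun k => (hτlestuff k).2.1
  have hτleabsint : ∀ k, Integrable (fun ω => |τle k ω|) ℙ := fun k => (hτlestuff k).2.2.1
  have hτleabsval : ∀ k, ∫ ω, |τle k ω| ∂ℙ = ∫ ω, |τ ω| ∂(ℙ[|{ω | τ ω ≤ ξ}]) :=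
    fun k => (hτlestuff k).2.2.2
  -- facts about Y
  have hYkint : ∀ k, Integrable (Y k) ℙ := fun k => (hYid k).integrable_iff.mpr hYint
  have hYkval : ∀ k, ∫ ω, Y k ω ∂ℙ = ∫ ω, Y 0 ω ∂ℙ := fun k => (hYid k).integral_eq
  have hYkabsint : ∀ k, Integrable (fun ω => |Y k ω|) ℙ := fun k => (hYkint k).abs
  have hYkabsval : ∀ k, ∫ ω, |Y k ω| ∂ℙ = ∫ ω, |Y 0 ω| ∂ℙ := fun k =>
    ((hYid k).comp continuous_abs.measurable).integral_eq
  -- independence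
  have hpairNτt : IndepFun (fun ω => (N ω : ℝ)) τt ℙ :=
    hindep.indepFun (show (Sum.inr (Sum.inr 2) : ℕ ⊕ (ℕ ⊕ Fin 3)) ≠ Sum.inr (Sum.inr 0)
      by decide)
  have hpairindep : ∀ i : ℕ ⊕ (ℕ ⊕ Fin 3), i ≠ Sum.inr (Sum.inr 2) → i ≠ Sum.inr (Sum.inr 0) →
      IndepFun (fun ω => ((N ω : ℝ), τt ω)) (F i) ℙ := fun i h2 h0 =>
    hindep.indepFun_prodMk hfm (Sum.inr (Sum.inr 2)) (Sum.inr (Sum.inr 0)) i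
      (Ne.symm h2) (Ne.symm h0)
  have hindY : ∀ k, IndepFun (fun ω => ((N ω : ℝ), τt ω)) (Y k) ℙ := fun k =>
    hpairindep (Sum.inl k) (by simp) (by simp)
  have hindτle : ∀ k, IndepFun (fun ω => ((N ω : ℝ), τt ω)) (τle k) ℙ := fun k =>
    hpairindep (Sum.inr (Sum.inl k)) (by simp) (by simp)
  have hindτgt : IndepFun (fun ω => ((N ω : ℝ), τt ω)) τgt ℙ :=
    hpairindep (Sum.inr (Sum.inr 1)) (by decide) (by decide)
  have hindYabs : ∀ k, IndepFun (fun ω => ((N ω : ℝ), τt ω)) (fun ω => |Y k ω|) ℙ := fun k =>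
    (hindY k).comp measurable_id continuous_abs.measurable
  have hindτleabs : ∀ k, IndepFun (fun ω => ((N ω : ℝ), τt ω)) (fun ω => |τle k ω|) ℙ := fun k =>
    (hindτle k).comp measurable_id continuous_abs.measurable
  have hindτgtabs : IndepFun (fun ω => ((N ω : ℝ), τt ω)) (fun ω => |τgt ω|) ℙ :=
    hindτgt.comp measurable_id continuous_abs.measurable
  -- the key product formula
  have hkey : ∀ (n : ℕ) (Z : Ω → ℝ), Integrable Z ℙ →
      IndepFun (fun ω => ((N ω : ℝ), τt ω)) Z ℙ →
      ∫ ω, ({ω' | N ω' = n}).indicator (fun _ => (1:ℝ)) ω *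
          (({ω' | τt ω' ≤ ξ}).indicator (fun _ => (1:ℝ)) ω * Z ω) ∂ℙ
        = (ℙ {ω' | N ω' = n}).toReal * ((ℙ {ω' | τt ω' ≤ ξ}).toReal * ∫ ω, Z ω ∂ℙ) := by
    intro n Z hZ hind
    have h := key2 hNR hτtmeas hZ hind hpairNτt
      (measurableSet_singleton ((n : ℝ))) (measurableSet_Iic (a := ξ))
    rw [hApre n] at h
    exact h
  -- abbreviations
  set mY := ∫ ω, Y 0 ω ∂ℙ with hmY
  set mle := ∫ ω, τ ω ∂(ℙ[|{ω | τ ω ≤ ξ}]) with hmle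
  set mgt := ∫ ω, τ ω ∂(ℙ[|{ω | ξ < τ ω}]) with hmgt
  set aY := ∫ ω, |Y 0 ω| ∂ℙ with haY
  set ale := ∫ ω, |τ ω| ∂(ℙ[|{ω | τ ω ≤ ξ}]) with hale
  set agt := ∫ ω, |τ ω| ∂(ℙ[|{ω | ξ < τ ω}]) with hagt
  set qr := (ℙ {ω | τt ω ≤ ξ}).toReal with hqr
  have haYnn : 0 ≤ aY := integral_nonneg fun ω => abs_nonneg _
  have halenn : 0 ≤ ale := integral_nonneg fun ω => abs_nonneg _
  have hagtnn : 0 ≤ agt := integral_nonneg fun ω => abs_nonneg _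
  have hqrnn : 0 ≤ qr := ENNReal.toReal_nonneg
  -- the random-sum functions
  set g : ℕ → Ω → ℝ := fun n ω =>
    (∑ k ∈ Finset.Icc 1 (n - 1), (Y k ω - τle k ω)) + (Y n ω - τgt ω) with hgdef
  set H : ℕ → Ω → ℝ := fun n ω =>
    (∑ k ∈ Finset.Icc 1 (n - 1), (|Y k ω| + |τle k ω|)) + (|Y n ω| + |τgt ω|) with hHdef
  set FF : Ω → ℝ := fun ω => if τt ω ≤ ξ then g (N ω) ω else 0 with hFFdef
  have hgm : ∀ n, Measurable (g n) := fun n =>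
    (Finset.measurable_sum _ fun k _ => (hYmeas k).sub (hτlemeas k)).add
      ((hYmeas n).sub hτgtmeas)
  have hHm : ∀ n, Measurable (H n) := fun n =>
    (Finset.measurable_sum _ fun k _ => (hYmeas k).abs.add (hτlemeas k).abs).add
      ((hYmeas n).abs.add hτgtmeas.abs)
  have hHint : ∀ n, Integrable (H n) ℙ := fun n =>
    (integrable_finset_sum _ fun k _ => (hYkabsint k).add (hτleabsint k)).add
      ((hYkabsint n).add hτgtabsint)
  have hgNm : Measurable fun ω => g (N ω) ω := by
    have h1 : Measurable (fun q : Ω × ℕ => g q.2 q.1) :=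
      measurable_from_prod_countable_left fun n => hgm n
    exact h1.comp (measurable_id.prodMk hNmeas)
  have hFFm : Measurable FF := by
    have he : FF = fun ω => ({ω' | τt ω' ≤ ξ}).indicator (fun ω => g (N ω) ω) ω := by
      funext ω
      by_cases h : τt ω ≤ ξ <;> simp [hFFdef, Set.indicator_apply, h]
    rw [he]
    exact hgNm.indicator hB
  -- integrability of the truncated products
  have hTint : ∀ (n : ℕ) (Z : Ω → ℝ), Integrable Z ℙ →
      Integrable (fun ω => ({ω' | N ω' = n}).indicator (fun _ => (1:ℝ)) ω *
        (({ω' | τt ω' ≤ ξ}).indicator (fun _ => (1:ℝ)) ω * Z ω)) ℙ := by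
    intro n Z hZ
    refine Integrable.mono' hZ.abs
      (((measurable_const.indicator (hA n)).aestronglyMeasurable.mul
        ((measurable_const.indicator hB).aestronglyMeasurable.mul hZ.1))) ?_
    filter_upwards with ω
    rw [Real.norm_eq_abs]
    by_cases h1 : ω ∈ {ω' | N ω' = n} <;> by_cases h2 : ω ∈ {ω' | τt ω' ≤ ξ} <;>
      simp [Set.indicator_apply, h1, h2, abs_nonneg]
  have hTs : ∀ (n : ℕ) (Z1 Z2 : Ω → ℝ), Integrable Z1 ℙ → Integrable Z2 ℙ →
      Integrable (fun ω => ({ω' | N ω' = n}).indicator (fun _ => (1:ℝ)) ω *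
          (({ω' | τt ω' ≤ ξ}).indicator (fun _ => (1:ℝ)) ω * Z1 ω) -
        ({ω' | N ω' = n}).indicator (fun _ => (1:ℝ)) ω *
          (({ω' | τt ω' ≤ ξ}).indicator (fun _ => (1:ℝ)) ω * Z2 ω)) ℙ :=
    fun n Z1 Z2 h1 h2 => (hTint n Z1 h1).sub (hTint n Z2 h2)
  have hTa : ∀ (n : ℕ) (Z1 Z2 : Ω → ℝ), Integrable Z1 ℙ → Integrable Z2 ℙ →
      Integrable (fun ω => ({ω' | N ω' = n}).indicator (fun _ => (1:ℝ)) ω *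
          (({ω' | τt ω' ≤ ξ}).indicator (fun _ => (1:ℝ)) ω * Z1 ω) +
        ({ω' | N ω' = n}).indicator (fun _ => (1:ℝ)) ω *
          (({ω' | τt ω' ≤ ξ}).indicator (fun _ => (1:ℝ)) ω * Z2 ω)) ℙ :=
    fun n Z1 Z2 h1 h2 => (hTint n Z1 h1).add (hTint n Z2 h2)
  -- the value of each truncated product integral
  have hpern : ∀ n : ℕ,
      ∫ ω, ({ω' | N ω' = n}).indicator (fun _ => (1:ℝ)) ω *
          (({ω' | τt ω' ≤ ξ}).indicator (fun _ => (1:ℝ)) ω * g n ω) ∂ℙ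
        = (ℙ {ω' | N ω' = n}).toReal *
            (((n - 1 : ℕ) : ℝ) * (qr * (mY - mle)) + qr * (mY - mgt)) := by
    intro n
    have hexp : (fun ω => ({ω' | N ω' = n}).indicator (fun _ => (1:ℝ)) ω *
          (({ω' | τt ω' ≤ ξ}).indicator (fun _ => (1:ℝ)) ω * g n ω))
        = fun ω => (∑ k ∈ Finset.Icc 1 (n - 1),
            (({ω' | N ω' = n}).indicator (fun _ => (1:ℝ)) ω *
                (({ω' | τt ω' ≤ ξ}).indicator (fun _ => (1:ℝ)) ω * Y k ω) -
             ({ω' | N ω' = n}).indicator (fun _ => (1:ℝ)) ω *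
                (({ω' | τt ω' ≤ ξ}).indicator (fun _ => (1:ℝ)) ω * τle k ω)))
          + (({ω' | N ω' = n}).indicator (fun _ => (1:ℝ)) ω *
                (({ω' | τt ω' ≤ ξ}).indicator (fun _ => (1:ℝ)) ω * Y n ω) -
             ({ω' | N ω' = n}).indicator (fun _ => (1:ℝ)) ω *
                (({ω' | τt ω' ≤ ξ}).indicator (fun _ => (1:ℝ)) ω * τgt ω)) := by
      funext ω
      simp only [hgdef, mul_add, mul_sub, Finset.mul_sum]
    rw [hexp, integral_add (integrable_finset_sum _ fun k _ =>
        hTs n (Y k) (τle k) (hYkint k) (hτleint k))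
        (hTs n (Y n) τgt (hYkint n) hτgtint),
      integral_finset_sum _ (fun k _ =>
        hTs n (Y k) (τle k) (hYkint k) (hτleint k)),
      integral_sub (hTint n (Y n) (hYkint n)) (hTint n τgt hτgtint),
      hkey n (Y n) (hYkint n) (hindY n), hkey n τgt hτgtint hindτgt, hYkval n, hτgtval]
    have hterm : ∀ k ∈ Finset.Icc 1 (n - 1),
        (∫ ω, (({ω' | N ω' = n}).indicator (fun _ => (1:ℝ)) ω *
            (({ω' | τt ω' ≤ ξ}).indicator (fun _ => (1:ℝ)) ω * Y k ω) -
          ({ω' | N ω' = n}).indicator (fun _ => (1:ℝ)) ω *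
            (({ω' | τt ω' ≤ ξ}).indicator (fun _ => (1:ℝ)) ω * τle k ω)) ∂ℙ)
          = (ℙ {ω' | N ω' = n}).toReal * (qr * mY) -
            (ℙ {ω' | N ω' = n}).toReal * (qr * mle) := by
      intro k _
      rw [integral_sub (hTint n (Y k) (hYkint k)) (hTint n (τle k) (hτleint k)),
        hkey n (Y k) (hYkint k) (hindY k), hkey n (τle k) (hτleint k) (hindτle k),
        hYkval k, hτleval k]
    rw [Finset.sum_congr rfl hterm, Finset.sum_const, Nat.card_Icc, nsmul_eq_mul]
    have hcard : ((n - 1 + 1 - 1 : ℕ) : ℝ) = ((n - 1 : ℕ) : ℝ) :=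
      congrArg _ (by omega)
    rw [hcard]
    ring
  have hpernH : ∀ n : ℕ,
      ∫ ω, ({ω' | N ω' = n}).indicator (fun _ => (1:ℝ)) ω *
          (({ω' | τt ω' ≤ ξ}).indicator (fun _ => (1:ℝ)) ω * H n ω) ∂ℙ
        = (ℙ {ω' | N ω' = n}).toReal *
            (((n - 1 : ℕ) : ℝ) * (qr * (aY + ale)) + qr * (aY + agt)) := by
    intro n
    have hexp : (fun ω => ({ω' | N ω' = n}).indicator (fun _ => (1:ℝ)) ω *
          (({ω' | τt ω' ≤ ξ}).indicator (fun _ => (1:ℝ)) ω * H n ω))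
        = fun ω => (∑ k ∈ Finset.Icc 1 (n - 1),
            (({ω' | N ω' = n}).indicator (fun _ => (1:ℝ)) ω *
                (({ω' | τt ω' ≤ ξ}).indicator (fun _ => (1:ℝ)) ω * |Y k ω|) +
             ({ω' | N ω' = n}).indicator (fun _ => (1:ℝ)) ω *
                (({ω' | τt ω' ≤ ξ}).indicator (fun _ => (1:ℝ)) ω * |τle k ω|)))
          + (({ω' | N ω' = n}).indicator (fun _ => (1:ℝ)) ω *
                (({ω' | τt ω' ≤ ξ}).indicator (fun _ => (1:ℝ)) ω * |Y n ω|) +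
             ({ω' | N ω' = n}).indicator (fun _ => (1:ℝ)) ω *
                (({ω' | τt ω' ≤ ξ}).indicator (fun _ => (1:ℝ)) ω * |τgt ω|)) := by
      funext ω
      simp only [hHdef, mul_add, Finset.mul_sum]
    rw [hexp, integral_add (integrable_finset_sum _ fun k _ =>
        hTa n _ _ (hYkabsint k) (hτleabsint k))
        (hTa n _ _ (hYkabsint n) hτgtabsint),
      integral_finset_sum _ (fun k _ =>
        hTa n _ _ (hYkabsint k) (hτleabsint k)),
      integral_add (hTint n _ (hYkabsint n)) (hTint n _ hτgtabsint),
      hkey n _ (hYkabsint n) (hindYabs n), hkey n _ hτgtabsint hindτgtabs,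
      hYkabsval n, hτgtabsval]
    have hterm : ∀ k ∈ Finset.Icc 1 (n - 1),
        (∫ ω, (({ω' | N ω' = n}).indicator (fun _ => (1:ℝ)) ω *
            (({ω' | τt ω' ≤ ξ}).indicator (fun _ => (1:ℝ)) ω * |Y k ω|) +
          ({ω' | N ω' = n}).indicator (fun _ => (1:ℝ)) ω *
            (({ω' | τt ω' ≤ ξ}).indicator (fun _ => (1:ℝ)) ω * |τle k ω|)) ∂ℙ)
          = (ℙ {ω' | N ω' = n}).toReal * (qr * aY) +
            (ℙ {ω' | N ω' = n}).toReal * (qr * ale) := by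
      intro k _
      rw [integral_add (hTint n _ (hYkabsint k)) (hTint n _ (hτleabsint k)),
        hkey n _ (hYkabsint k) (hindYabs k), hkey n _ (hτleabsint k) (hindτleabs k),
        hYkabsval k, hτleabsval k]
    rw [Finset.sum_congr rfl hterm, Finset.sum_const, Nat.card_Icc, nsmul_eq_mul]
    have hcard : ((n - 1 + 1 - 1 : ℕ) : ℝ) = ((n - 1 : ℕ) : ℝ) :=
      congrArg _ (by omega)
    rw [hcard]
    ring
  -- relating the set integral over {N = n} to the truncated product
  have hsetFF : ∀ n : ℕ, ∫ ω in {ω' | N ω' = n}, FF ω ∂ℙ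
      = ∫ ω, ({ω' | N ω' = n}).indicator (fun _ => (1:ℝ)) ω *
          (({ω' | τt ω' ≤ ξ}).indicator (fun _ => (1:ℝ)) ω * g n ω) ∂ℙ := by
    intro n
    rw [← integral_indicator (hA n)]
    refine integral_congr_ae (Filter.Eventually.of_forall fun ω => ?_)
    by_cases hn : N ω = n
    · by_cases hb : τt ω ≤ ξ <;>
        simp [Set.indicator_apply, hn, hb, hFFdef]
    · simp [Set.indicator_apply, hn]
  -- geometric facts
  have hgs : Summable (fun m : ℕ => (1 - p) ^ m * p) :=
    (summable_geometric_of_lt_one (by linarith) (by linarith)).mul_right p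
  have hgeom_sum : ∑' m : ℕ, (1 - p) ^ m * p = 1 := by
    rw [tsum_mul_right, tsum_geometric_of_lt_one (by linarith) (by linarith)]
    have : (1 : ℝ) - (1 - p) = p := by ring
    rw [this]
    field_simp
  have hA0 : ℙ {ω' | N ω' = 0} = 0 := by
    have hmu : ∑' n : ℕ, ℙ {ω' | N ω' = n} = 1 := by
      rw [← measure_iUnion hdisj hA, hUnion, measure_univ]
    have htail : ∑' m : ℕ, ℙ {ω' | N ω' = m + 1} = 1 := by
      have heq : ∀ m : ℕ, ℙ {ω' | N ω' = m + 1} = ENNReal.ofReal ((1 - p) ^ m * p) := by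
        intro m
        rw [hN (m + 1) (by omega)]
        simp
      rw [tsum_congr heq, ← ENNReal.ofReal_tsum_of_nonneg
        (fun m => mul_nonneg (pow_nonneg (by linarith) m) hp0.le) hgs, hgeom_sum,
        ENNReal.ofReal_one]
    have hz := tsum_eq_zero_add' (f := fun n : ℕ => ℙ {ω' | N ω' = n}) ENNReal.summable
    rw [hmu, htail] at hz
    have h2 : 1 + ℙ {ω' | N ω' = 0} = 1 + 0 := by
      rw [add_comm] at hz
      simpa using hz.symm
    exact (ENNReal.add_right_inj ENNReal.one_ne_top).mp h2
  have hPn1 : ∀ m : ℕ, (ℙ {ω' | N ω' = m + 1}).toReal = (1 - p) ^ m * p := by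
    intro m
    rw [hN (m + 1) (by omega)]
    simp only [Nat.add_sub_cancel]
    exact ENNReal.toReal_ofReal (mul_nonneg (pow_nonneg (by linarith) m) hp0.le)
  have key_series : ∀ c1 c2 : ℝ,
      HasSum (fun n : ℕ => (ℙ {ω' | N ω' = n}).toReal * (((n - 1 : ℕ) : ℝ) * c1 + c2))
        ((1 / p - 1) * c1 + c2) := by
    intro c1 c2
    have hnorm : ‖1 - p‖ < 1 := by
      rw [Real.norm_eq_abs, abs_of_nonneg (by linarith)]; linarith
    have h1 := (hasSum_coe_mul_geometric_of_norm_lt_one hnorm).mul_right (p * c1)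
    have h2 := (hasSum_geometric_of_lt_one (r := 1 - p) (by linarith) (by linarith)).mul_right
      (p * c2)
    have h3 := h1.add h2
    have h4 : HasSum (fun m : ℕ =>
        (ℙ {ω' | N ω' = m + 1}).toReal * (((m + 1 - 1 : ℕ) : ℝ) * c1 + c2))
        ((1 / p - 1) * c1 + c2) := by
      convert h3 using 1
      · rfl
      · funext m
        rw [hPn1 m]
        simp only [Nat.add_sub_cancel]
        ring
      · have hpp : (1 : ℝ) - (1 - p) = p := by ring
        rw [hpp]
        field_simp
    have h5 := (hasSum_nat_add_iff
      (f := fun n : ℕ => (ℙ {ω' | N ω' = n}).toReal * (((n - 1 : ℕ) : ℝ) * c1 + c2)) 1).mp h4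
    simpa [hA0] using h5
  -- integrability of FF
  have hHnn : ∀ n ω, 0 ≤ H n ω := by
    intro n ω
    exact add_nonneg (Finset.sum_nonneg fun k _ =>
        add_nonneg (abs_nonneg _) (abs_nonneg _))
      (add_nonneg (abs_nonneg _) (abs_nonneg _))
  have habsg : ∀ n ω, |g n ω| ≤ H n ω := by
    intro n ω
    refine (abs_add_le _ _).trans (add_le_add ?_ (abs_sub _ _))
    exact (Finset.abs_sum_le_sum_abs _ _).trans (Finset.sum_le_sum fun k _ => abs_sub _ _)
  have hindnn : ∀ (S : Set Ω) (ω : Ω), 0 ≤ S.indicator (fun _ => (1:ℝ)) ω :=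
    fun S ω => Set.indicator_nonneg (fun _ _ => zero_le_one) ω
  have hFFint : Integrable FF ℙ := by
    refine ⟨hFFm.aestronglyMeasurable, ?_⟩
    rw [hasFiniteIntegral_iff_norm]
    have hbound : ∀ n : ℕ, ∫⁻ ω in {ω' | N ω' = n}, ENNReal.ofReal ‖FF ω‖ ∂ℙ
        ≤ ENNReal.ofReal ((ℙ {ω' | N ω' = n}).toReal *
            (((n - 1 : ℕ) : ℝ) * (qr * (aY + ale)) + qr * (aY + agt))) := by
      intro n
      have hb1 : ∫⁻ ω in {ω' | N ω' = n}, ENNReal.ofReal ‖FF ω‖ ∂ℙ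
          ≤ ∫⁻ ω, ENNReal.ofReal (({ω' | N ω' = n}).indicator (fun _ => (1:ℝ)) ω *
              (({ω' | τt ω' ≤ ξ}).indicator (fun _ => (1:ℝ)) ω * H n ω)) ∂ℙ := by
        rw [← lintegral_indicator (hA n)]
        refine lintegral_mono fun ω => ?_
        rw [Set.indicator_apply]
        split_ifs with hn
        · have hn' : N ω = n := hn
          apply ENNReal.ofReal_le_ofReal
          by_cases hb : τt ω ≤ ξ
          · have hFFω : FF ω = g n ω := by simp [hFFdef, hb, hn']
            rw [Real.norm_eq_abs, hFFω]
            have e1 : ({ω' | N ω' = n}).indicator (fun _ => (1:ℝ)) ω = 1 := by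
              simp [Set.indicator_apply, hn']
            have e2 : ({ω' | τt ω' ≤ ξ}).indicator (fun _ => (1:ℝ)) ω = 1 := by
              simp [Set.indicator_apply, hb]
            rw [e1, e2, one_mul, one_mul]
            exact habsg n ω
          · have hFFω : FF ω = 0 := by simp [hFFdef, hb]
            rw [Real.norm_eq_abs, hFFω, abs_zero]
            exact mul_nonneg (hindnn _ ω) (mul_nonneg (hindnn _ ω) (hHnn n ω))
        · exact zero_le
      have hb2 : ∫⁻ ω, ENNReal.ofReal (({ω' | N ω' = n}).indicator (fun _ => (1:ℝ)) ω *
              (({ω' | τt ω' ≤ ξ}).indicator (fun _ => (1:ℝ)) ω * H n ω)) ∂ℙ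
          = ENNReal.ofReal ((ℙ {ω' | N ω' = n}).toReal *
              (((n - 1 : ℕ) : ℝ) * (qr * (aY + ale)) + qr * (aY + agt))) := by
        rw [← ofReal_integral_eq_lintegral_ofReal (hTint n (H n) (hHint n))
          (Filter.Eventually.of_forall fun ω =>
            mul_nonneg (hindnn _ ω) (mul_nonneg (hindnn _ ω) (hHnn n ω))), hpernH n]
      exact hb1.trans hb2.le
    calc ∫⁻ ω, ENNReal.ofReal ‖FF ω‖ ∂ℙ
        = ∫⁻ ω in Set.univ, ENNReal.ofReal ‖FF ω‖ ∂ℙ := by rw [Measure.restrict_univ]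
      _ = ∫⁻ ω in ⋃ n : ℕ, {ω' | N ω' = n}, ENNReal.ofReal ‖FF ω‖ ∂ℙ := by rw [hUnion]
      _ = ∑' n : ℕ, ∫⁻ ω in {ω' | N ω' = n}, ENNReal.ofReal ‖FF ω‖ ∂ℙ :=
          lintegral_iUnion hA hdisj _
      _ ≤ ∑' n : ℕ, ENNReal.ofReal ((ℙ {ω' | N ω' = n}).toReal *
            (((n - 1 : ℕ) : ℝ) * (qr * (aY + ale)) + qr * (aY + agt))) :=
          ENNReal.tsum_le_tsum hbound
      _ < ⊤ := by
          rw [← ENNReal.ofReal_tsum_of_nonneg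
            (fun n => mul_nonneg ENNReal.toReal_nonneg
              (add_nonneg (mul_nonneg (Nat.cast_nonneg _)
                (mul_nonneg hqrnn (add_nonneg haYnn halenn)))
                (mul_nonneg hqrnn (add_nonneg haYnn hagtnn))))
            (key_series (qr * (aY + ale)) (qr * (aY + agt))).summable]
          exact ENNReal.ofReal_lt_top
  -- putting everything together
  have hsplit : ∫ ω, cycleIncrement ξ τt τgt Y τle N ω ∂ℙ
      = (mY - ∫ ω, τt ω ∂ℙ) + ∫ ω, FF ω ∂ℙ := by
    calc ∫ ω, cycleIncrement ξ τt τgt Y τle N ω ∂ℙ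
        = ∫ ω, ((Y 0 ω - τt ω) + FF ω) ∂ℙ := rfl
      _ = (mY - ∫ ω, τt ω ∂ℙ) + ∫ ω, FF ω ∂ℙ := by
          have h1 : Integrable (fun ω => Y 0 ω - τt ω) ℙ := hYint.sub hτtint
          rw [integral_add h1 hFFint, integral_sub hYint hτtint]
  have hFFval : ∫ ω, FF ω ∂ℙ = qr * ((1 / p - 1) * (mY - mle) + (mY - mgt)) := by
    have h1 : ∫ ω, FF ω ∂ℙ = ∑' n : ℕ, ∫ ω in {ω' | N ω' = n}, FF ω ∂ℙ := by
      rw [← setIntegral_univ, ← hUnion, integral_iUnion hA hdisj hFFint.integrableOn]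
    have h2 : ∀ n : ℕ, ∫ ω in {ω' | N ω' = n}, FF ω ∂ℙ
        = (ℙ {ω' | N ω' = n}).toReal *
            (((n - 1 : ℕ) : ℝ) * (qr * (mY - mle)) + qr * (mY - mgt)) := by
      intro n
      rw [hsetFF n, hpern n]
    rw [h1, tsum_congr h2, (key_series (qr * (mY - mle)) (qr * (mY - mgt))).tsum_eq]
    ring
  rw [hsplit, hFFval]
end

section
/- Suppose in addition that τ is exponentially distributed with rate λ₁ > 0, τ̃ is exponentially distributed with rate λ₂ > 0, and the claims Y_k are exponentially distributed with rate β > 0. Then E[X₁] = e^{λ₁ξ} [ (1/β − 1/λ₁)(1 − e^{−λ₂ξ}) + (1/β − 1/λ₂) e^{−λ₁ξ} ]; in particular the net profit condition E[X₁] < 0 holds if and only if (1/β − 1/λ₁)(1 − e^{−λ₂ξ}) + (1/β − 1/λ₂) e^{−λ₁ξ} < 0. -/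
open MeasureTheory ProbabilityTheory Filter Set

open MeasureTheory ProbabilityTheory Filter Set Real

lemma my_expMeasure_Iio_zero (r : ℝ) : expMeasure r (Iio 0) = 0 := by
  rw [expMeasure, gammaMeasure, withDensity_apply _ measurableSet_Iio]
  exact lintegral_gammaPDF_of_nonpos le_rfl

lemma my_expMeasure_Iic {r : ℝ} (hr : 0 < r) {x : ℝ} (hx : 0 ≤ x) :
    expMeasure r (Iic x) = ENNReal.ofReal (1 - exp (-(r * x))) := by
  have h := lintegral_exponentialPDF_eq_antiDeriv hr x
  rw [expMeasure, gammaMeasure, withDensity_apply _ measurableSet_Iic]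
  have he : (gammaPDF 1 r) = exponentialPDF r := rfl
  rw [he, h, if_pos hx]

lemma my_expMeasure_Ioi {r : ℝ} (hr : 0 < r) {x : ℝ} (hx : 0 ≤ x) :
    expMeasure r (Ioi x) = ENNReal.ofReal (exp (-(r * x))) := by
  have : IsProbabilityMeasure (expMeasure r) := isProbabilityMeasure_expMeasure hr
  have h1 : expMeasure r (Ioi x) = 1 - expMeasure r (Iic x) := by
    rw [← prob_compl_eq_one_sub measurableSet_Iic, compl_Iic]
  have hle : exp (-(r * x)) ≤ 1 := exp_le_one_iff.2 (by nlinarith)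
  rw [h1, my_expMeasure_Iic hr hx, ← ENNReal.ofReal_one,
    ← ENNReal.ofReal_sub _ (by nlinarith [exp_pos (-(r*x))])]
  norm_num

lemma my_expMeasure_ae_nonneg {r : ℝ} : ∀ᵐ x ∂(expMeasure r), 0 ≤ x := by
  rw [ae_iff]
  have : {x : ℝ | ¬ 0 ≤ x} = Iio 0 := by ext x; simp
  rw [this]; exact my_expMeasure_Iio_zero r

lemma my_key_lintegral {r : ℝ} (hr : 0 < r) :
    ∫⁻ x, ENNReal.ofReal |x| ∂(expMeasure r) = ENNReal.ofReal (1 / r) := by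
  have hm : Measurable (gammaPDF 1 r) := (measurable_gammaPDFReal 1 r).ennreal_ofReal
  rw [expMeasure, gammaMeasure, lintegral_withDensity_eq_lintegral_mul _ hm (by fun_prop)]
  have he : (gammaPDF 1 r) = exponentialPDF r := rfl
  rw [he]
  simp only [Pi.mul_apply]
  rw [lintegral_congr (fun a => mul_comm ((exponentialPDF r) a) (ENNReal.ofReal |a|)),
    ← lintegral_add_compl (fun x => ENNReal.ofReal |x| * exponentialPDF r x) measurableSet_Ici]
  have h2 : ∫⁻ x in (Ici (0:ℝ))ᶜ, ENNReal.ofReal |x| * exponentialPDF r x = 0 := by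
    rw [compl_Ici]
    rw [setLIntegral_congr_fun measurableSet_Iio (fun x (hx : x < 0) => by
      rw [exponentialPDF_of_neg hx, mul_zero])]
    simp
  have hint : IntegrableOn (fun x : ℝ => x * (r * exp (-(r * x)))) (Ici 0) := by
    rw [integrableOn_Ici_iff_integrableOn_Ioi]
    have := integrableOn_rpow_mul_exp_neg_mul_rpow (s := 1) (p := 1) (by norm_num) (by norm_num) hr
    apply (this.const_mul r).congr
    apply ae_restrict_of_forall_mem measurableSet_Ioi
    intro x hx
    simp only [rpow_one]; ring
  have h1 : ∫⁻ x in Ici (0:ℝ), ENNReal.ofReal |x| * exponentialPDF r x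
      = ENNReal.ofReal (∫ x in Ici (0:ℝ), x * (r * exp (-(r * x)))) := by
    rw [ofReal_integral_eq_lintegral_ofReal hint
      (ae_restrict_of_forall_mem measurableSet_Ici (fun x hx => by
        have : (0:ℝ) ≤ x := hx; positivity))]
    apply setLIntegral_congr_fun measurableSet_Ici
    intro x hx
    have hx0 : (0:ℝ) ≤ x := hx
    dsimp only
    rw [exponentialPDF_of_nonneg hx0, abs_of_nonneg hx0,
      ← ENNReal.ofReal_mul hx0]
  have h3 : ∫ x in Ici (0:ℝ), x * (r * exp (-(r * x))) = 1 / r := by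
    rw [integral_Ici_eq_integral_Ioi]
    have : ∫ x in Ioi (0:ℝ), x * (r * exp (-(r * x)))
        = r * ∫ x in Ioi (0:ℝ), x ^ ((2:ℝ) - 1) * exp (-(r * x)) := by
      rw [← integral_const_mul]
      apply setIntegral_congr_fun measurableSet_Ioi
      intro x hx
      norm_num [rpow_one]; ring
    rw [this, integral_rpow_mul_exp_neg_mul_Ioi (by norm_num) hr,
      show ((2:ℝ)) = ((2:ℕ):ℝ) by norm_num, rpow_natCast,
      show ((2:ℕ):ℝ) = (1:ℕ) + 1 by norm_num, Real.Gamma_nat_eq_factorial]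
    norm_num
    field_simp
  rw [h2, add_zero, h1, h3]


lemma my_integrable_id_expMeasure {r : ℝ} (hr : 0 < r) : Integrable id (expMeasure r) := by
  refine ⟨aestronglyMeasurable_id, ?_⟩
  rw [HasFiniteIntegral]
  have : ∀ x : ℝ, ‖x‖ₑ = ENNReal.ofReal |x| := fun x => by
    rw [Real.enorm_eq_ofReal_abs]
  simp only [id_eq, this, my_key_lintegral hr]
  exact ENNReal.ofReal_lt_top

lemma my_integral_id_expMeasure {r : ℝ} (hr : 0 < r) : ∫ x, x ∂(expMeasure r) = 1 / r := by
  have hae : ∀ᵐ x ∂(expMeasure r), 0 ≤ x := my_expMeasure_ae_nonneg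
  rw [integral_eq_lintegral_of_nonneg_ae hae aestronglyMeasurable_id]
  have : ∫⁻ x, ENNReal.ofReal x ∂(expMeasure r) = ∫⁻ x, ENNReal.ofReal |x| ∂(expMeasure r) :=
    lintegral_congr_ae (hae.mono fun x hx => by
      show ENNReal.ofReal x = ENNReal.ofReal |x|
      rw [abs_of_nonneg hx])
  rw [this, my_key_lintegral hr, ENNReal.toReal_ofReal (by positivity)]

section Indep
variable {Ω ι : Type*} [MeasurableSpace Ω] {μ : Measure Ω} [IsProbabilityMeasure μ]
  {F : ι → Ω → ℝ}

lemma my_indep_mul2 (hmeas : ∀ i, Measurable (F i))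
    (hind : iIndepFun F μ) {i j : ι} (hij : i ≠ j)
    {φ ψ : ℝ → ℝ} (mφ : Measurable φ) (mψ : Measurable ψ) :
    ∫ ω, φ (F i ω) * ψ (F j ω) ∂μ = (∫ ω, φ (F i ω) ∂μ) * ∫ ω, ψ (F j ω) ∂μ :=
  ((hind.indepFun hij).comp mφ mψ).integral_fun_mul_eq_mul_integral
    (mφ.comp (hmeas i)).aestronglyMeasurable (mψ.comp (hmeas j)).aestronglyMeasurable

lemma my_indep_mul3 (hmeas : ∀ i, Measurable (F i))
    (hind : iIndepFun F μ) {i j k : ι}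
    (hij : i ≠ j) (hik : i ≠ k) (hjk : j ≠ k)
    {φ ψ χ : ℝ → ℝ} (mφ : Measurable φ) (mψ : Measurable ψ) (mχ : Measurable χ) :
    ∫ ω, φ (F i ω) * ψ (F j ω) * χ (F k ω) ∂μ
      = (∫ ω, φ (F i ω) ∂μ) * (∫ ω, ψ (F j ω) ∂μ) * ∫ ω, χ (F k ω) ∂μ := by
  have hpair : IndepFun (fun ω => (F i ω, F j ω)) (F k) μ :=
    hind.indepFun_prodMk hmeas i j k hik hjk
  have hm2 : Measurable (fun p : ℝ × ℝ => φ p.1 * ψ p.2) :=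
    (mφ.comp measurable_fst).mul (mψ.comp measurable_snd)
  have h := (hpair.comp hm2 mχ).integral_fun_mul_eq_mul_integral
    ((hm2.comp ((hmeas i).prodMk (hmeas j))).aestronglyMeasurable)
    ((mχ.comp (hmeas k)).aestronglyMeasurable)
  have h2 := my_indep_mul2 hmeas hind hij mφ mψ
  calc ∫ ω, φ (F i ω) * ψ (F j ω) * χ (F k ω) ∂μ
      = ∫ ω, (fun p : ℝ × ℝ => φ p.1 * ψ p.2) (F i ω, F j ω) * χ (F k ω) ∂μ := rfl
    _ = (∫ ω, φ (F i ω) * ψ (F j ω) ∂μ) * ∫ ω, χ (F k ω) ∂μ := h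
    _ = (∫ ω, φ (F i ω) ∂μ) * (∫ ω, ψ (F j ω) ∂μ) * ∫ ω, χ (F k ω) ∂μ := by rw [h2]

end Indep

lemma my_geom_summable {p : ℝ} (hp0 : 0 < p) (hp1 : p < 1) (c d : ℝ) :
    Summable (fun k : ℕ => c * p * ((k : ℝ) * (1 - p) ^ k) + d * p * (1 - p) ^ k) := by
  have hr0 : (0:ℝ) ≤ 1 - p := by linarith
  have hrn : ‖(1 - p : ℝ)‖ < 1 := by rw [Real.norm_eq_abs, abs_of_nonneg hr0]; linarith
  have s1 : Summable (fun k : ℕ => (k:ℝ) * (1 - p) ^ k) := by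
    have := summable_pow_mul_geometric_of_norm_lt_one 1 hrn (R := ℝ)
    simpa using this
  exact (s1.mul_left _).add ((summable_geometric_of_lt_one hr0 (by linarith)).mul_left _)

lemma my_geom_tsum {p : ℝ} (hp0 : 0 < p) (hp1 : p < 1) (c d : ℝ) :
    ∑' k : ℕ, (c * p * ((k : ℝ) * (1 - p) ^ k) + d * p * (1 - p) ^ k)
      = c * (1 - p) / p + d := by
  have hr0 : (0:ℝ) ≤ 1 - p := by linarith
  have hrn : ‖(1 - p : ℝ)‖ < 1 := by rw [Real.norm_eq_abs, abs_of_nonneg hr0]; linarith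
  have s1 : Summable (fun k : ℕ => (k:ℝ) * (1 - p) ^ k) := by
    have := summable_pow_mul_geometric_of_norm_lt_one 1 hrn (R := ℝ)
    simpa using this
  have s2 : Summable (fun k : ℕ => ((1:ℝ) - p) ^ k) :=
    summable_geometric_of_lt_one hr0 (by linarith)
  rw [Summable.tsum_add (s1.mul_left _) (s2.mul_left _), tsum_mul_left, tsum_mul_left,
    tsum_coe_mul_geometric_of_norm_lt_one hrn, tsum_geometric_of_lt_one hr0 (by linarith)]
  have hp : p ≠ 0 := ne_of_gt hp0
  field_simp
  ring_nf
  field_simp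
  ring


set_option maxHeartbeats 1000000 in
/-- If moreover `τ ~ Exp(λ₁)`, `τ̃ ~ Exp(λ₂)` and the claims are
`Exp(β)`, then
`E X₁ = e^{λ₁ξ} [ (1/β − 1/λ₁)(1 − e^{−λ₂ξ}) + (1/β − 1/λ₂) e^{−λ₁ξ} ]`; in particular
the net profit condition `E X₁ < 0` holds iff
`(1/β − 1/λ₁)(1 − e^{−λ₂ξ}) + (1/β − 1/λ₂) e^{−λ₁ξ} < 0`. -/
theorem cycleIncrement_mean_exponential
    {Ω : Type*} [MeasureSpace Ω] [IsProbabilityMeasure (ℙ : Measure Ω)]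
    (ξ : ℝ) (hξ : 0 < ξ)
    (τ τt τgt : Ω → ℝ) (Y τle : ℕ → Ω → ℝ) (N : Ω → ℕ)
    (hτmeas : Measurable τ) (hτtmeas : Measurable τt) (hτgtmeas : Measurable τgt)
    (hYmeas : ∀ k, Measurable (Y k)) (hτlemeas : ∀ k, Measurable (τle k))
    (hNmeas : Measurable N)
    (hτpos : ∀ᵐ ω ∂ℙ, 0 < τ ω) (hτtpos : ∀ᵐ ω ∂ℙ, 0 < τt ω)
    (p : ℝ) (hpdef : p = (ℙ {ω | ξ < τ ω}).toReal) (hp0 : 0 < p) (hp1 : p < 1)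
    (hYid : ∀ k, IdentDistrib (Y k) (Y 0) ℙ ℙ) (hYnn : ∀ k, ∀ᵐ ω ∂ℙ, 0 ≤ Y k ω)
    (hτle : ∀ k, Measure.map (τle k) ℙ = Measure.map τ (ℙ[|{ω | τ ω ≤ ξ}]))
    (hτgt : Measure.map τgt ℙ = Measure.map τ (ℙ[|{ω | ξ < τ ω}]))
    (hN : ∀ k : ℕ, 1 ≤ k → ℙ {ω | N ω = k} = ENNReal.ofReal ((1 - p) ^ (k - 1) * p))
    (hindep : iIndepFun (cycleFamily τt τgt Y τle N) ℙ)
    -- exponential distributions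
    (lam₁ lam₂ β : ℝ) (hlam₁ : 0 < lam₁) (hlam₂ : 0 < lam₂) (hβ : 0 < β)
    (hτexp : Measure.map τ ℙ = expMeasure lam₁)
    (hτtexp : Measure.map τt ℙ = expMeasure lam₂)
    (hYexp : Measure.map (Y 0) ℙ = expMeasure β) :
    (∫ ω, cycleIncrement ξ τt τgt Y τle N ω ∂ℙ =
      Real.exp (lam₁ * ξ) *
        ((1 / β - 1 / lam₁) * (1 - Real.exp (-(lam₂ * ξ))) +
          (1 / β - 1 / lam₂) * Real.exp (-(lam₁ * ξ)))) ∧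
    ((∫ ω, cycleIncrement ξ τt τgt Y τle N ω ∂ℙ) < 0 ↔
      (1 / β - 1 / lam₁) * (1 - Real.exp (-(lam₂ * ξ))) +
        (1 / β - 1 / lam₂) * Real.exp (-(lam₁ * ξ)) < 0) := by

  classical
  -- shorthand
  set p' : ℝ := Real.exp (-(lam₁ * ξ)) with hp'def
  set q : ℝ := 1 - Real.exp (-(lam₂ * ξ)) with hqdef
  have hp'0 : 0 < p' := Real.exp_pos _
  have hp'1 : p' < 1 := by
    rw [hp'def]
    have : 0 < lam₁ * ξ := by positivity
    calc Real.exp (-(lam₁ * ξ)) < Real.exp 0 := Real.exp_lt_exp.2 (by linarith)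
    _ = 1 := Real.exp_zero
  -- the family
  have hFY : ∀ k, cycleFamily τt τgt Y τle N (Sum.inl k) = Y k := fun k => rfl
  have hFL : ∀ k, cycleFamily τt τgt Y τle N (Sum.inr (Sum.inl k)) = τle k := fun k => rfl
  have hFt : cycleFamily τt τgt Y τle N (Sum.inr (Sum.inr 0)) = τt := rfl
  have hFg : cycleFamily τt τgt Y τle N (Sum.inr (Sum.inr 1)) = τgt := rfl
  have hFN : cycleFamily τt τgt Y τle N (Sum.inr (Sum.inr 2)) = fun ω => (N ω : ℝ) := rfl
  have hNcastmeas : Measurable (fun ω => (N ω : ℝ)) :=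
    (measurable_from_top : Measurable (Nat.cast : ℕ → ℝ)).comp hNmeas
  have hFmeas : ∀ i, Measurable (cycleFamily τt τgt Y τle N i) := by
    rintro (k | k | j)
    · exact hYmeas k
    · exact hτlemeas k
    · fin_cases j
      · exact hτtmeas
      · exact hτgtmeas
      · exact hNcastmeas
  -- basic distributional facts
  have hτint : Integrable τ ℙ := by
    have h0 := my_integrable_id_expMeasure hlam₁
    rw [← hτexp] at h0
    exact (integrable_map_measure aestronglyMeasurable_id hτmeas.aemeasurable).mp h0
  have hEτ : ∫ ω, τ ω ∂ℙ = 1 / lam₁ := by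
    have h0 := integral_map (μ := ℙ) hτmeas.aemeasurable
      (aestronglyMeasurable_id (μ := Measure.map τ ℙ))
    rw [hτexp] at h0
    have h1 := my_integral_id_expMeasure hlam₁
    simp only [id_eq] at h0 h1
    rw [← h0, h1]
  have hτtint : Integrable τt ℙ := by
    have h0 := my_integrable_id_expMeasure hlam₂
    rw [← hτtexp] at h0
    exact (integrable_map_measure aestronglyMeasurable_id hτtmeas.aemeasurable).mp h0
  have hEτt : ∫ ω, τt ω ∂ℙ = 1 / lam₂ := by
    have h0 := integral_map (μ := ℙ) hτtmeas.aemeasurable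
      (aestronglyMeasurable_id (μ := Measure.map τt ℙ))
    rw [hτtexp] at h0
    have h1 := my_integral_id_expMeasure hlam₂
    simp only [id_eq] at h0 h1
    rw [← h0, h1]
  have hY0int : Integrable (Y 0) ℙ := by
    have h0 := my_integrable_id_expMeasure hβ
    rw [← hYexp] at h0
    exact (integrable_map_measure aestronglyMeasurable_id (hYmeas 0).aemeasurable).mp h0
  have hYint : ∀ k, Integrable (Y k) ℙ := fun k => (hYid k).integrable_iff.mpr hY0int
  have hEY : ∀ k, ∫ ω, Y k ω ∂ℙ = 1 / β := by
    intro k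
    rw [(hYid k).integral_eq]
    have h0 := integral_map (μ := ℙ) (hYmeas 0).aemeasurable
      (aestronglyMeasurable_id (μ := Measure.map (Y 0) ℙ))
    rw [hYexp] at h0
    have h1 := my_integral_id_expMeasure hβ
    simp only [id_eq] at h0 h1
    rw [← h0, h1]
  -- the events for τ
  have hAmeas : MeasurableSet {ω | τ ω ≤ ξ} := hτmeas measurableSet_Iic
  have hBmeas : MeasurableSet {ω | ξ < τ ω} := hτmeas measurableSet_Ioi
  have hPB : ℙ {ω | ξ < τ ω} = ENNReal.ofReal p' := by
    have h0 : ℙ {ω | ξ < τ ω} = Measure.map τ ℙ (Ioi ξ) := by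
      rw [Measure.map_apply hτmeas measurableSet_Ioi]; rfl
    rw [h0, hτexp, my_expMeasure_Ioi hlam₁ hξ.le]
  have hPA : ℙ {ω | τ ω ≤ ξ} = ENNReal.ofReal (1 - p') := by
    have h0 : ℙ {ω | τ ω ≤ ξ} = Measure.map τ ℙ (Iic ξ) := by
      rw [Measure.map_apply hτmeas measurableSet_Iic]; rfl
    rw [h0, hτexp, my_expMeasure_Iic hlam₁ hξ.le]
  have hpp : p = p' := by
    rw [hpdef, hPB, ENNReal.toReal_ofReal hp'0.le]
  have hPAtoReal : (ℙ {ω | τ ω ≤ ξ}).toReal = 1 - p' := by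
    rw [hPA, ENNReal.toReal_ofReal (by linarith)]
  have hPBtoReal : (ℙ {ω | ξ < τ ω}).toReal = p' := by
    rw [hPB, ENNReal.toReal_ofReal hp'0.le]
  have hPAne : ℙ {ω | τ ω ≤ ξ} ≠ 0 := by
    rw [hPA]; simp only [ne_eq, ENNReal.ofReal_eq_zero, not_le]; linarith
  have hPBne : ℙ {ω | ξ < τ ω} ≠ 0 := by
    rw [hPB]; simp only [ne_eq, ENNReal.ofReal_eq_zero, not_le]; linarith
  -- conditional means
  have hcondA : (ℙ[|{ω | τ ω ≤ ξ}]) = (ℙ {ω | τ ω ≤ ξ})⁻¹ • Measure.restrict ℙ {ω | τ ω ≤ ξ} := rfl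
  have hcondB : (ℙ[|{ω | ξ < τ ω}]) = (ℙ {ω | ξ < τ ω})⁻¹ • Measure.restrict ℙ {ω | ξ < τ ω} := rfl
  have hτcondAint : Integrable τ (ℙ[|{ω | τ ω ≤ ξ}]) := by
    rw [hcondA]
    exact (hτint.restrict).smul_measure (ENNReal.inv_ne_top.2 hPAne)
  have hτcondBint : Integrable τ (ℙ[|{ω | ξ < τ ω}]) := by
    rw [hcondB]
    exact (hτint.restrict).smul_measure (ENNReal.inv_ne_top.2 hPBne)
  have hEcondA : ∫ ω, τ ω ∂(ℙ[|{ω | τ ω ≤ ξ}])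
      = (1 - p')⁻¹ * ∫ ω in {ω | τ ω ≤ ξ}, τ ω ∂ℙ := by
    rw [hcondA, integral_smul_measure, ENNReal.toReal_inv, hPAtoReal, smul_eq_mul]
  have hEcondB : ∫ ω, τ ω ∂(ℙ[|{ω | ξ < τ ω}])
      = p'⁻¹ * ∫ ω in {ω | ξ < τ ω}, τ ω ∂ℙ := by
    rw [hcondB, integral_smul_measure, ENNReal.toReal_inv, hPBtoReal, smul_eq_mul]
  -- τle k : integrability and common mean a
  have hτleint : ∀ k, Integrable (τle k) ℙ := by
    intro k
    have h1 : Integrable id (Measure.map (τle k) ℙ) := by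
      rw [hτle k]
      exact (integrable_map_measure aestronglyMeasurable_id hτmeas.aemeasurable).mpr hτcondAint
    exact (integrable_map_measure aestronglyMeasurable_id (hτlemeas k).aemeasurable).mp h1
  have hτgtint : Integrable τgt ℙ := by
    have h1 : Integrable id (Measure.map τgt ℙ) := by
      rw [hτgt]
      exact (integrable_map_measure aestronglyMeasurable_id hτmeas.aemeasurable).mpr hτcondBint
    exact (integrable_map_measure aestronglyMeasurable_id hτgtmeas.aemeasurable).mp h1
  set a : ℝ := (1 - p')⁻¹ * ∫ ω in {ω | τ ω ≤ ξ}, τ ω ∂ℙ with hadef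
  set b : ℝ := p'⁻¹ * ∫ ω in {ω | ξ < τ ω}, τ ω ∂ℙ with hbdef
  have hEτle : ∀ k, ∫ ω, τle k ω ∂ℙ = a := by
    intro k
    have h0 := integral_map (μ := ℙ) (hτlemeas k).aemeasurable
      (aestronglyMeasurable_id (μ := Measure.map (τle k) ℙ))
    have h1 := integral_map (μ := ℙ[|{ω | τ ω ≤ ξ}]) hτmeas.aemeasurable
      (aestronglyMeasurable_id (μ := Measure.map τ (ℙ[|{ω | τ ω ≤ ξ}])))
    rw [hτle k] at h0
    rw [h1] at h0
    simp only [id_eq] at h0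
    rw [← h0, hEcondA]
  have hEτgt : ∫ ω, τgt ω ∂ℙ = b := by
    have h0 := integral_map (μ := ℙ) hτgtmeas.aemeasurable
      (aestronglyMeasurable_id (μ := Measure.map τgt ℙ))
    have h1 := integral_map (μ := ℙ[|{ω | ξ < τ ω}]) hτmeas.aemeasurable
      (aestronglyMeasurable_id (μ := Measure.map τ (ℙ[|{ω | ξ < τ ω}])))
    rw [hτgt] at h0
    rw [h1] at h0
    simp only [id_eq] at h0
    rw [← h0, hEcondB]
  have hkey : (1 - p') * a + p' * b = 1 / lam₁ := by
    have hcompl : {ω | ξ < τ ω} = {ω | τ ω ≤ ξ}ᶜ := by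
      ext ω; simp [not_le]
    have hsplit := integral_add_compl hAmeas hτint
    rw [hadef, hbdef, ← mul_assoc, ← mul_assoc,
      mul_inv_cancel₀ (by linarith : (1:ℝ) - p' ≠ 0),
      mul_inv_cancel₀ (ne_of_gt hp'0), one_mul, one_mul, hcompl, hsplit, hEτ]
  -- probability of τt ≤ ξ
  have hPq : (ℙ {ω | τt ω ≤ ξ}).toReal = q := by
    have h0 : ℙ {ω | τt ω ≤ ξ} = Measure.map τt ℙ (Iic ξ) := by
      rw [Measure.map_apply hτtmeas measurableSet_Iic]; rfl
    rw [h0, hτtexp, my_expMeasure_Iic hlam₂ hξ.le, ENNReal.toReal_ofReal]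
    have : Real.exp (-(lam₂ * ξ)) < 1 := by
      calc Real.exp (-(lam₂ * ξ)) < Real.exp 0 := Real.exp_lt_exp.2 (by nlinarith)
      _ = 1 := Real.exp_zero
    linarith
  -- the geometric variable
  have hPkR : ∀ k : ℕ, (ℙ {ω | N ω = k + 1}).toReal = (1 - p') ^ k * p' := by
    intro k
    have h0 := hN (k+1) (by omega)
    simp only [Nat.add_sub_cancel] at h0
    rw [h0, hpp, ENNReal.toReal_ofReal
      (mul_nonneg (pow_nonneg (by linarith) k) hp'0.le)]
  have hgeom1 : ∑' k : ℕ, ((1 - p') ^ k * p') = 1 := by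
    rw [tsum_mul_right, tsum_geometric_of_lt_one (by linarith) (by linarith)]
    have : (1:ℝ) - (1 - p') = p' := by ring
    rw [this, inv_mul_cancel₀ (ne_of_gt hp'0)]
  have hN0 : ℙ {ω | N ω = 0} = 0 := by
    have hdisj : Pairwise (Function.onFun Disjoint fun k : ℕ => {ω | N ω = k + 1}) := by
      intro i j hij
      simp only [Function.onFun, Set.disjoint_left]
      intro ω h1 h2
      simp only [mem_setOf_eq] at h1 h2
      omega
    have hmeasU : ∀ k : ℕ, MeasurableSet {ω | N ω = k + 1} :=
      fun k => hNmeas (measurableSet_singleton _)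
    have hU : ℙ (⋃ k : ℕ, {ω | N ω = k + 1}) = 1 := by
      rw [measure_iUnion hdisj hmeasU]
      have : ∀ k : ℕ, ℙ {ω | N ω = k + 1} = ENNReal.ofReal ((1 - p') ^ k * p') := by
        intro k
        have h0 := hN (k+1) (by omega)
        simp only [Nat.add_sub_cancel] at h0
        rw [h0, hpp]
      simp_rw [this]
      rw [← ENNReal.ofReal_tsum_of_nonneg
        (fun k => mul_nonneg (pow_nonneg (by linarith) k) hp'0.le)
        ((summable_geometric_of_lt_one (by linarith) (by linarith)).mul_right p'), hgeom1,
        ENNReal.ofReal_one]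
    have hcompl : {ω | N ω = 0} = (⋃ k : ℕ, {ω | N ω = k + 1})ᶜ := by
      ext ω
      simp only [mem_setOf_eq, compl_iUnion, mem_iInter, mem_compl_iff]
      constructor
      · intro h k; omega
      · intro h
        by_contra h'
        exact h (N ω - 1) (by omega)
    rw [hcompl, prob_compl_eq_one_sub (MeasurableSet.iUnion hmeasU), hU, tsub_self]
  have hNae : ∀ᵐ ω ∂ℙ, N ω ≠ 0 := by
    rw [ae_iff]
    convert hN0 using 2
    ext ω; simp
  -- indicator functions
  set e1 : Ω → ℝ := fun ω => if τt ω ≤ ξ then 1 else 0 with he1def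
  set e2 : ℕ → Ω → ℝ := fun k ω => if (N ω : ℝ) = (k : ℝ) then 1 else 0 with he2def
  have he1meas : Measurable e1 := Measurable.ite (hτtmeas measurableSet_Iic)
    measurable_const measurable_const
  have he2meas : ∀ k, Measurable (e2 k) := fun k => Measurable.ite
    (hNcastmeas (measurableSet_singleton _)) measurable_const measurable_const
  have hInte1 : ∫ ω, e1 ω ∂ℙ = q := by
    have h0 : e1 = Set.indicator {ω | τt ω ≤ ξ} (fun _ => (1:ℝ)) := by
      funext ω
      by_cases h : τt ω ≤ ξ <;> simp [he1def, h, Set.indicator_apply, mem_setOf_eq]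
    rw [h0, integral_indicator_const (1:ℝ)
      (show MeasurableSet {ω | τt ω ≤ ξ} from hτtmeas measurableSet_Iic),
      smul_eq_mul, mul_one, measureReal_def, hPq]
  have hInte2 : ∀ k : ℕ, ∫ ω, e2 k ω ∂ℙ = (ℙ {ω | N ω = k}).toReal := by
    intro k
    have h0 : e2 k = Set.indicator {ω | N ω = k} (fun _ => (1:ℝ)) := by
      funext ω
      by_cases h : N ω = k
      · simp [he2def, h, Set.indicator_apply, mem_setOf_eq]
      · have : ¬ ((N ω : ℝ) = (k : ℝ)) := by exact_mod_cast h
        simp [he2def, this, h, Set.indicator_apply, mem_setOf_eq]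
    rw [h0, integral_indicator_const (1:ℝ)
      (show MeasurableSet {ω | N ω = k} from hNmeas (measurableSet_singleton k)),
      smul_eq_mul, mul_one, measureReal_def]
  -- the triple-product factorization
  have key3 : ∀ (k : ℕ) (i3 : ℕ ⊕ (ℕ ⊕ Fin 3)), i3 ≠ Sum.inr (Sum.inr 0) →
      i3 ≠ Sum.inr (Sum.inr 2) → ∀ (χ : ℝ → ℝ), Measurable χ →
      ∫ ω, e1 ω * e2 k ω * χ (cycleFamily τt τgt Y τle N i3 ω) ∂ℙ
        = q * (ℙ {ω | N ω = k}).toReal * ∫ ω, χ (cycleFamily τt τgt Y τle N i3 ω) ∂ℙ := by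
    intro k i3 h1 h2 χ hχ
    have mφ : Measurable (fun x : ℝ => if x ≤ ξ then (1:ℝ) else 0) :=
      Measurable.ite measurableSet_Iic measurable_const measurable_const
    have mψ : Measurable (fun x : ℝ => if x = (k:ℝ) then (1:ℝ) else 0) :=
      Measurable.ite (measurableSet_singleton _) measurable_const measurable_const
    have h := my_indep_mul3 hFmeas hindep
      (i := Sum.inr (Sum.inr 0)) (j := Sum.inr (Sum.inr 2)) (k := i3)
      (by simp) (Ne.symm h1) (Ne.symm h2) mφ mψ hχ
    rw [hFt, hFN] at h
    have he1eq : (fun ω => (fun x : ℝ => if x ≤ ξ then (1:ℝ) else 0) (τt ω)) = e1 := rfl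
    have he2eq : (fun ω => (fun x : ℝ => if x = (k:ℝ) then (1:ℝ) else 0) ((N ω : ℝ))) = e2 k := rfl
    calc ∫ ω, e1 ω * e2 k ω * χ (cycleFamily τt τgt Y τle N i3 ω) ∂ℙ
        = (∫ ω, e1 ω ∂ℙ) * (∫ ω, e2 k ω ∂ℙ)
            * ∫ ω, χ (cycleFamily τt τgt Y τle N i3 ω) ∂ℙ := h
      _ = q * (ℙ {ω | N ω = k}).toReal
            * ∫ ω, χ (cycleFamily τt τgt Y τle N i3 ω) ∂ℙ := by rw [hInte1, hInte2]

  -- summand functions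
  set g : ℕ → Ω → ℝ := fun k ω =>
    (∑ j ∈ Finset.Icc 1 (k - 1), (Y j ω - τle j ω)) + (Y k ω - τgt ω) with hgdef
  set f : ℕ → Ω → ℝ := fun k ω => if 1 ≤ k then e1 ω * e2 k ω * g k ω else 0 with hfdef
  have hgmeas : ∀ k, Measurable (g k) := by
    intro k
    exact (Finset.measurable_sum _ (fun j _ => (hYmeas j).sub (hτlemeas j))).add
      ((hYmeas k).sub hτgtmeas)
  have hgint : ∀ k, Integrable (g k) ℙ := by
    intro k
    exact (integrable_finset_sum _ (fun j _ => (hYint j).sub (hτleint j))).add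
      ((hYint k).sub hτgtint)
  have hfmeas : ∀ k, Measurable (f k) := by
    intro k
    by_cases h : 1 ≤ k
    · simp only [hfdef, if_pos h]
      exact (he1meas.mul (he2meas k)).mul (hgmeas k)
    · simp only [hfdef, if_neg h]
      exact measurable_const
  have he1bd : ∀ ω, 0 ≤ e1 ω ∧ e1 ω ≤ 1 := by
    intro ω
    simp only [he1def]
    by_cases h : τt ω ≤ ξ <;> simp [h]
  have he2bd : ∀ k ω, 0 ≤ e2 k ω ∧ e2 k ω ≤ 1 := by
    intro k ω
    simp only [he2def]
    by_cases h : (N ω : ℝ) = (k : ℝ) <;> simp [h]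
  have he12bd : ∀ k ω, ‖e1 ω * e2 k ω‖ ≤ 1 := by
    intro k ω
    rw [Real.norm_eq_abs, abs_mul, abs_of_nonneg (he1bd ω).1, abs_of_nonneg (he2bd k ω).1]
    calc e1 ω * e2 k ω ≤ 1 * 1 :=
      mul_le_mul (he1bd ω).2 (he2bd k ω).2 (he2bd k ω).1 zero_le_one
    _ = 1 := one_mul 1
  have hprodint : ∀ k (w : Ω → ℝ), Integrable w ℙ →
      Integrable (fun ω => e1 ω * e2 k ω * w ω) ℙ := by
    intro k w hw
    exact hw.bdd_mul ((he1meas.mul (he2meas k)).aestronglyMeasurable) (c := 1) (ae_of_all _ (he12bd k))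
  have he2int : ∀ k (w : Ω → ℝ), Integrable w ℙ →
      Integrable (fun ω => e2 k ω * w ω) ℙ := by
    intro k w hw
    refine hw.bdd_mul (he2meas k).aestronglyMeasurable (c := 1) (ae_of_all _ fun ω => ?_)
    rw [Real.norm_eq_abs, abs_of_nonneg (he2bd k ω).1]
    exact (he2bd k ω).2
  have hfint : ∀ k, Integrable (f k) ℙ := by
    intro k
    by_cases h : 1 ≤ k
    · simp only [hfdef, if_pos h]
      exact hprodint k (g k) (hgint k)
    · simp only [hfdef, if_neg h]
      exact integrable_const 0
  -- pairwise factorization with e2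
  have key2 : ∀ (k : ℕ) (i3 : ℕ ⊕ (ℕ ⊕ Fin 3)), i3 ≠ Sum.inr (Sum.inr 2) →
      ∀ (χ : ℝ → ℝ), Measurable χ →
      ∫ ω, e2 k ω * χ (cycleFamily τt τgt Y τle N i3 ω) ∂ℙ
        = (ℙ {ω | N ω = k}).toReal * ∫ ω, χ (cycleFamily τt τgt Y τle N i3 ω) ∂ℙ := by
    intro k i3 h2 χ hχ
    have mψ : Measurable (fun x : ℝ => if x = (k:ℝ) then (1:ℝ) else 0) :=
      Measurable.ite (measurableSet_singleton _) measurable_const measurable_const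
    have h := my_indep_mul2 hFmeas hindep
      (i := Sum.inr (Sum.inr 2)) (j := i3) (Ne.symm h2) mψ hχ
    rw [hFN] at h
    calc ∫ ω, e2 k ω * χ (cycleFamily τt τgt Y τle N i3 ω) ∂ℙ
        = (∫ ω, e2 k ω ∂ℙ) * ∫ ω, χ (cycleFamily τt τgt Y τle N i3 ω) ∂ℙ := h
      _ = _ := by rw [hInte2]
  -- constants for domination
  set C1 : ℝ := (∫ ω, |Y 0 ω| ∂ℙ) + ∫ ω, |τle 0 ω| ∂ℙ with hC1def
  set C2 : ℝ := (∫ ω, |Y 0 ω| ∂ℙ) + ∫ ω, |τgt ω| ∂ℙ with hC2def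
  have habsY : ∀ j, ∫ ω, |Y j ω| ∂ℙ = ∫ ω, |Y 0 ω| ∂ℙ := by
    intro j
    exact ((hYid j).comp continuous_abs.measurable).integral_eq
  have habsτle : ∀ j, ∫ ω, |τle j ω| ∂ℙ = ∫ ω, |τle 0 ω| ∂ℙ := by
    intro j
    have h1 := integral_map (μ := ℙ) (hτlemeas j).aemeasurable
      (continuous_abs.measurable.aestronglyMeasurable (μ := Measure.map (τle j) ℙ))
    have h2 := integral_map (μ := ℙ) (hτlemeas 0).aemeasurable
      (continuous_abs.measurable.aestronglyMeasurable (μ := Measure.map (τle 0) ℙ))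
    rw [hτle j] at h1
    rw [hτle 0] at h2
    rw [← h1, ← h2]
  -- value of the integral of f (m+1)
  have hIk : ∀ m : ℕ, ∫ ω, f (m+1) ω ∂ℙ
      = q * ((1 - p') ^ m * p') * ((m:ℝ) * (1/β - a) + (1/β - b)) := by
    intro m
    have hk1 : 1 ≤ m + 1 := by omega
    have h1 : (fun ω => f (m+1) ω) = fun ω =>
        (∑ j ∈ Finset.Icc 1 m, (e1 ω * e2 (m+1) ω * Y j ω - e1 ω * e2 (m+1) ω * τle j ω))
        + (e1 ω * e2 (m+1) ω * Y (m+1) ω - e1 ω * e2 (m+1) ω * τgt ω) := by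
      funext ω
      simp only [hfdef, if_pos hk1, hgdef, Nat.add_sub_cancel]
      rw [mul_add, Finset.mul_sum]
      congr 1
      · exact Finset.sum_congr rfl (fun j _ => by ring)
      · ring
    have hA : Integrable (fun ω => ∑ j ∈ Finset.Icc 1 m,
        (e1 ω * e2 (m+1) ω * Y j ω - e1 ω * e2 (m+1) ω * τle j ω)) ℙ := by
      apply integrable_finset_sum
      intro j _
      exact (hprodint (m+1) _ (hYint j)).sub (hprodint (m+1) _ (hτleint j))
    have hB : Integrable (fun ω =>
        e1 ω * e2 (m+1) ω * Y (m+1) ω - e1 ω * e2 (m+1) ω * τgt ω) ℙ :=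
      (hprodint (m+1) _ (hYint (m+1))).sub (hprodint (m+1) _ hτgtint)
    have hterm : ∀ j ∈ Finset.Icc 1 m, Integrable (fun ω =>
        e1 ω * e2 (m+1) ω * Y j ω - e1 ω * e2 (m+1) ω * τle j ω) ℙ :=
      fun j _ => (hprodint (m+1) _ (hYint j)).sub (hprodint (m+1) _ (hτleint j))
    rw [h1, integral_add hA hB, integral_finset_sum _ hterm]
    have hYterm : ∀ j : ℕ, ∫ ω, e1 ω * e2 (m+1) ω * Y j ω ∂ℙ
        = q * ((1 - p') ^ m * p') * (1/β) := by
      intro j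
      have h := key3 (m+1) (Sum.inl j) (by simp) (by simp) id measurable_id
      simp only [hFY, id_eq] at h
      rw [h, hPkR m, hEY j]
    have hLterm : ∀ j : ℕ, ∫ ω, e1 ω * e2 (m+1) ω * τle j ω ∂ℙ
        = q * ((1 - p') ^ m * p') * a := by
      intro j
      have h := key3 (m+1) (Sum.inr (Sum.inl j)) (by simp) (by simp) id measurable_id
      simp only [hFL, id_eq] at h
      rw [h, hPkR m, hEτle j]
    have hGterm : ∫ ω, e1 ω * e2 (m+1) ω * τgt ω ∂ℙ
        = q * ((1 - p') ^ m * p') * b := by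
      have h := key3 (m+1) (Sum.inr (Sum.inr 1)) (by simp) (by simp) id measurable_id
      simp only [hFg, id_eq] at h
      rw [h, hPkR m, hEτgt]
    have hsub : ∀ j ∈ Finset.Icc 1 m,
        ∫ ω, (e1 ω * e2 (m+1) ω * Y j ω - e1 ω * e2 (m+1) ω * τle j ω) ∂ℙ
          = q * ((1 - p') ^ m * p') * (1/β - a) := by
      intro j _
      rw [integral_sub (hprodint (m+1) _ (hYint j)) (hprodint (m+1) _ (hτleint j)),
        hYterm j, hLterm j]
      ring
    rw [Finset.sum_congr rfl hsub, Finset.sum_const, Nat.card_Icc,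
      integral_sub (hprodint (m+1) _ (hYint (m+1))) (hprodint (m+1) _ hτgtint),
      hYterm (m+1), hGterm]
    simp only [Nat.add_sub_cancel, nsmul_eq_mul]
    ring
  -- domination for the series
  set bigB : ℕ → Ω → ℝ := fun k ω =>
    (∑ j ∈ Finset.Icc 1 (k-1), (|Y j ω| + |τle j ω|)) + (|Y k ω| + |τgt ω|) with hBdef
  have hBint : ∀ k, Integrable (bigB k) ℙ := by
    intro k
    exact (integrable_finset_sum _ (fun j _ => (hYint j).abs.add (hτleint j).abs)).add
      ((hYint k).abs.add hτgtint.abs)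
  have hfle : ∀ k ω, ‖f k ω‖ ≤ e2 k ω * bigB k ω := by
    intro k ω
    have hBnn : 0 ≤ bigB k ω := by
      refine add_nonneg (Finset.sum_nonneg (fun j _ => add_nonneg (abs_nonneg _) (abs_nonneg _)))
        (add_nonneg (abs_nonneg _) (abs_nonneg _))
    by_cases h : 1 ≤ k
    · have hgle : |g k ω| ≤ bigB k ω := by
        simp only [hgdef, hBdef]
        calc |(∑ j ∈ Finset.Icc 1 (k-1), (Y j ω - τle j ω)) + (Y k ω - τgt ω)|
            ≤ |∑ j ∈ Finset.Icc 1 (k-1), (Y j ω - τle j ω)| + |Y k ω - τgt ω| := abs_add_le _ _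
          _ ≤ (∑ j ∈ Finset.Icc 1 (k-1), |Y j ω - τle j ω|) + (|Y k ω| + |τgt ω|) := by
              gcongr
              · exact Finset.abs_sum_le_sum_abs _ _
              · exact abs_sub _ _
          _ ≤ (∑ j ∈ Finset.Icc 1 (k-1), (|Y j ω| + |τle j ω|)) + (|Y k ω| + |τgt ω|) := by
              gcongr with j hj
              exact abs_sub _ _
      simp only [hfdef, if_pos h]
      rw [Real.norm_eq_abs, abs_mul, abs_mul, abs_of_nonneg (he1bd ω).1,
        abs_of_nonneg (he2bd k ω).1]
      calc e1 ω * e2 k ω * |g k ω| ≤ 1 * e2 k ω * |g k ω| := by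
            apply mul_le_mul_of_nonneg_right _ (abs_nonneg _)
            exact mul_le_mul_of_nonneg_right (he1bd ω).2 (he2bd k ω).1
        _ = e2 k ω * |g k ω| := by ring
        _ ≤ e2 k ω * bigB k ω := mul_le_mul_of_nonneg_left hgle (he2bd k ω).1
    · simp only [hfdef, if_neg h]
      simpa using mul_nonneg (he2bd k ω).1 hBnn
  have hEbigB : ∀ m : ℕ, ∫ ω, e2 (m+1) ω * bigB (m+1) ω ∂ℙ
      = ((1 - p') ^ m * p') * ((m:ℝ) * C1 + C2) := by
    intro m
    have h1 : (fun ω => e2 (m+1) ω * bigB (m+1) ω) = fun ω =>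
        (∑ j ∈ Finset.Icc 1 m, (e2 (m+1) ω * |Y j ω| + e2 (m+1) ω * |τle j ω|))
        + (e2 (m+1) ω * |Y (m+1) ω| + e2 (m+1) ω * |τgt ω|) := by
      funext ω
      simp only [hBdef, Nat.add_sub_cancel]
      rw [mul_add, Finset.mul_sum]
      congr 1
      · exact Finset.sum_congr rfl (fun j _ => by ring)
      · ring
    have habs : Measurable (fun x : ℝ => |x|) := continuous_abs.measurable
    have hYt : ∀ j : ℕ, ∫ ω, e2 (m+1) ω * |Y j ω| ∂ℙ
        = ((1 - p') ^ m * p') * ∫ ω, |Y 0 ω| ∂ℙ := by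
      intro j
      have h := key2 (m+1) (Sum.inl j) (by simp) (fun x => |x|) habs
      simp only [hFY] at h
      rw [h, hPkR m, habsY j]
    have hLt : ∀ j : ℕ, ∫ ω, e2 (m+1) ω * |τle j ω| ∂ℙ
        = ((1 - p') ^ m * p') * ∫ ω, |τle 0 ω| ∂ℙ := by
      intro j
      have h := key2 (m+1) (Sum.inr (Sum.inl j)) (by simp) (fun x => |x|) habs
      simp only [hFL] at h
      rw [h, hPkR m, habsτle j]
    have hGt : ∫ ω, e2 (m+1) ω * |τgt ω| ∂ℙ
        = ((1 - p') ^ m * p') * ∫ ω, |τgt ω| ∂ℙ := by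
      have h := key2 (m+1) (Sum.inr (Sum.inr 1)) (by simp) (fun x => |x|) habs
      simp only [hFg] at h
      rw [h, hPkR m]
    have hA : Integrable (fun ω => ∑ j ∈ Finset.Icc 1 m,
        (e2 (m+1) ω * |Y j ω| + e2 (m+1) ω * |τle j ω|)) ℙ := by
      apply integrable_finset_sum
      intro j _
      exact (he2int (m+1) _ (hYint j).abs).add (he2int (m+1) _ (hτleint j).abs)
    have hB : Integrable (fun ω =>
        e2 (m+1) ω * |Y (m+1) ω| + e2 (m+1) ω * |τgt ω|) ℙ :=
      (he2int (m+1) _ (hYint (m+1)).abs).add (he2int (m+1) _ hτgtint.abs)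
    have hterm : ∀ j ∈ Finset.Icc 1 m, Integrable (fun ω =>
        e2 (m+1) ω * |Y j ω| + e2 (m+1) ω * |τle j ω|) ℙ :=
      fun j _ => (he2int (m+1) _ (hYint j).abs).add (he2int (m+1) _ (hτleint j).abs)
    rw [h1, integral_add hA hB, integral_finset_sum _ hterm]
    have hsum : ∀ j ∈ Finset.Icc 1 m,
        ∫ ω, (e2 (m+1) ω * |Y j ω| + e2 (m+1) ω * |τle j ω|) ∂ℙ
          = ((1 - p') ^ m * p') * C1 := by
      intro j _
      rw [integral_add (he2int (m+1) _ (hYint j).abs) (he2int (m+1) _ (hτleint j).abs),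
        hYt j, hLt j, hC1def]
      ring
    rw [Finset.sum_congr rfl hsum, Finset.sum_const, Nat.card_Icc,
      integral_add (he2int (m+1) _ (hYint (m+1)).abs) (he2int (m+1) _ hτgtint.abs),
      hYt (m+1), hGt, hC2def]
    simp only [Nat.add_sub_cancel, nsmul_eq_mul]
    ring
  have hC1nn : 0 ≤ C1 := add_nonneg (integral_nonneg (fun ω => abs_nonneg _))
    (integral_nonneg (fun ω => abs_nonneg _))
  have hC2nn : 0 ≤ C2 := add_nonneg (integral_nonneg (fun ω => abs_nonneg _))
    (integral_nonneg (fun ω => abs_nonneg _))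
  set c : ℕ → ℝ := fun k => if 1 ≤ k then
      ((1 - p') ^ (k-1) * p') * (((k:ℝ) - 1) * C1 + C2) else 0 with hcdef
  have hcsucc : ∀ m : ℕ, c (m+1)
      = C1 * p' * ((m:ℝ) * (1 - p') ^ m) + C2 * p' * (1 - p') ^ m := by
    intro m
    simp only [hcdef, if_pos (by omega : 1 ≤ m + 1), Nat.add_sub_cancel]
    push_cast
    ring
  have hcnn : ∀ k, 0 ≤ c k := by
    intro k
    by_cases h : 1 ≤ k
    · simp only [hcdef, if_pos h]
      have h1 : (0:ℝ) ≤ (1 - p') ^ (k-1) * p' :=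
        mul_nonneg (pow_nonneg (by linarith) _) hp'0.le
      have h2 : (0:ℝ) ≤ ((k:ℝ) - 1) * C1 + C2 := by
        have : (1:ℝ) ≤ (k:ℝ) := by exact_mod_cast h
        have := mul_nonneg (by linarith : (0:ℝ) ≤ (k:ℝ) - 1) hC1nn
        linarith
      exact mul_nonneg h1 h2
    · simp only [hcdef, if_neg h]; exact le_rfl
  have hcsummable : Summable c := by
    rw [← summable_nat_add_iff 1]
    have : (fun m => c (m + 1)) = fun m : ℕ =>
        C1 * p' * ((m:ℝ) * (1 - p') ^ m) + C2 * p' * (1 - p') ^ m := funext hcsucc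
    rw [this]
    exact my_geom_summable hp'0 hp'1 C1 C2
  have hfnormle : ∀ k, ∫ ω, ‖f k ω‖ ∂ℙ ≤ c k := by
    intro k
    by_cases h : 1 ≤ k
    · obtain ⟨m, rfl⟩ : ∃ m, k = m + 1 := ⟨k - 1, by omega⟩
      have hle := integral_mono (hfint (m+1)).norm (he2int (m+1) _ (hBint (m+1)))
        (fun ω => hfle (m+1) ω)
      refine hle.trans ?_
      rw [hEbigB m, hcsucc m]
      push_cast
      ring_nf
      exact le_rfl
    · obtain rfl : k = 0 := by omega
      simp only [hfdef, hcdef]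
      norm_num
  have hlintle : ∀ k, ∫⁻ ω, ‖f k ω‖ₑ ∂ℙ ≤ ENNReal.ofReal (c k) := by
    intro k
    rw [← ofReal_integral_norm_eq_lintegral_enorm (hfint k)]
    exact ENNReal.ofReal_le_ofReal (hfnormle k)
  have hfin : ∑' k, ∫⁻ ω, ‖f k ω‖ₑ ∂ℙ ≠ ⊤ := by
    refine ne_top_of_le_ne_top ?_ (ENNReal.tsum_le_tsum hlintle)
    rw [← ENNReal.ofReal_tsum_of_nonneg hcnn hcsummable]
    exact ENNReal.ofReal_ne_top
  -- the second part of the increment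
  set hpart : Ω → ℝ := fun ω => if τt ω ≤ ξ then g (N ω) ω else 0 with hpartdef
  have hGmeas : Measurable (fun ω => g (N ω) ω) :=
    (measurable_from_prod_countable_left
      (f := fun pr : Ω × ℕ => g pr.2 pr.1) (fun k => hgmeas k)).comp
      (measurable_id.prodMk hNmeas)
  have hpartmeas : Measurable hpart :=
    Measurable.ite (hτtmeas measurableSet_Iic) hGmeas measurable_const
  have haeeq : ∀ᵐ ω ∂ℙ, hpart ω = ∑' k, f k ω := by
    filter_upwards [hNae] with ω hω
    have hsingle : ∀ k, k ≠ N ω → f k ω = 0 := by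
      intro k hk
      by_cases h1 : 1 ≤ k
      · have he20 : e2 k ω = 0 := by
          simp only [he2def]
          rw [if_neg]
          intro hc
          exact hk (Nat.cast_injective hc).symm
        simp only [hfdef, if_pos h1, he20]
        ring
      · simp only [hfdef, if_neg h1]
    rw [tsum_eq_single (N ω) hsingle]
    have h1 : 1 ≤ N ω := by omega
    have he21 : e2 (N ω) ω = 1 := by simp [he2def]
    simp only [hfdef, if_pos h1, he21, hpartdef]
    by_cases h : τt ω ≤ ξ
    · simp only [he1def, if_pos h]
      ring
    · simp only [he1def, if_neg h]
      ring
  have hpartint : Integrable hpart ℙ := by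
    refine ⟨hpartmeas.aestronglyMeasurable, ?_⟩
    rw [HasFiniteIntegral]
    have hle : ∫⁻ ω, ‖hpart ω‖ₑ ∂ℙ ≤ ∑' k, ∫⁻ ω, ‖f k ω‖ₑ ∂ℙ := by
      have h1 : ∫⁻ ω, ‖hpart ω‖ₑ ∂ℙ ≤ ∫⁻ ω, ∑' k, ‖f k ω‖ₑ ∂ℙ := by
        refine lintegral_mono_ae ?_
        filter_upwards [hNae] with ω hω
        have h2 : hpart ω = f (N ω) ω := by
          have h1 : 1 ≤ N ω := by omega
          have he21 : e2 (N ω) ω = 1 := by simp [he2def]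
          simp only [hfdef, if_pos h1, he21, hpartdef]
          by_cases h : τt ω ≤ ξ
          · simp only [he1def, if_pos h]; ring
          · simp only [he1def, if_neg h]; ring
        rw [h2]
        exact ENNReal.le_tsum (N ω)
      refine h1.trans_eq ?_
      exact lintegral_tsum (fun k => (hfmeas k).enorm.aemeasurable)
    exact lt_of_le_of_lt hle (lt_top_iff_ne_top.mpr hfin)
  have hEpart : ∫ ω, hpart ω ∂ℙ
      = q * (1/β - a) * (1 - p') / p' + q * (1/β - b) := by
    have h1 : ∫ ω, hpart ω ∂ℙ = ∫ ω, (∑' k, f k ω) ∂ℙ := integral_congr_ae haeeq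
    rw [h1, integral_tsum (fun k => (hfmeas k).aestronglyMeasurable) hfin]
    have hsummable : Summable (fun k => ∫ ω, f k ω ∂ℙ) := by
      rw [← summable_nat_add_iff 1]
      have : (fun m => ∫ ω, f (m+1) ω ∂ℙ) = fun m : ℕ =>
          (q * (1/β - a)) * p' * ((m:ℝ) * (1 - p') ^ m)
          + (q * (1/β - b)) * p' * (1 - p') ^ m := by
        funext m
        rw [hIk m]
        ring
      rw [this]
      exact my_geom_summable hp'0 hp'1 _ _
    rw [Summable.tsum_eq_zero_add hsummable]
    have hf0 : ∫ ω, f 0 ω ∂ℙ = 0 := by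
      simp only [hfdef]
      norm_num
    have : (fun m => ∫ ω, f (m+1) ω ∂ℙ) = fun m : ℕ =>
        (q * (1/β - a)) * p' * ((m:ℝ) * (1 - p') ^ m)
        + (q * (1/β - b)) * p' * (1 - p') ^ m := by
      funext m
      rw [hIk m]
      ring
    rw [hf0, this, my_geom_tsum hp'0 hp'1 (q * (1/β - a)) (q * (1/β - b))]
    ring
  -- assembling
  have hdecomp : (fun ω => cycleIncrement ξ τt τgt Y τle N ω)
      = fun ω => (Y 0 ω - τt ω) + hpart ω := by
    funext ω
    simp only [cycleIncrement, hpartdef, hgdef]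
  have hmean : ∫ ω, cycleIncrement ξ τt τgt Y τle N ω ∂ℙ
      = Real.exp (lam₁ * ξ) * ((1 / β - 1 / lam₁) * q + (1 / β - 1 / lam₂) * p') := by
    have hsub' : Integrable (fun ω => Y 0 ω - τt ω) ℙ := hY0int.sub hτtint
    rw [hdecomp, integral_add hsub' hpartint,
      integral_sub hY0int hτtint, hEY 0, hEτt, hEpart]
    have hexp : Real.exp (lam₁ * ξ) = p'⁻¹ := by
      rw [hp'def, Real.exp_neg, inv_inv]
    have hq2 : (1/β - a) * (1 - p') + p' * (1/β - b) = 1/β - 1/lam₁ := by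
      linear_combination (-1 : ℝ) * hkey
    have hp'ne : p' ≠ 0 := ne_of_gt hp'0
    have hstep : q * (1/β - a) * (1 - p') / p' + q * (1/β - b)
        = (q * (1/β - 1/lam₁)) / p' := by
      rw [eq_div_iff hp'ne, add_mul, div_mul_cancel₀ _ hp'ne]
      linear_combination q * hq2
    have hcancel : p'⁻¹ * ((1/β - 1/lam₂) * p') = (1/β - 1/lam₂) := by
      field_simp
    rw [hexp, hstep, mul_add, hcancel]
    ring
  refine ⟨hmean, ?_⟩
  rw [hmean]
  constructor
  · intro h
    nlinarith [Real.exp_pos (lam₁ * ξ)]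
  · intro h
    nlinarith [Real.exp_pos (lam₁ * ξ)]
end
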